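/- arXiv:1707.06863 — 6 statements merged into one kernel-verified Lean document; each statement's English description precedes it below -/
import Mathlib

section
/- Every variety of lines X in ℙ¹×ℙ¹×ℙ¹ has the Hyp_n(⋆)-property for every n > 6. -/
/-- A variety of lines in `ℙ¹×ℙ¹×ℙ¹` is modeled by a graph `G` on the hyperplanes,
colored by their three types; `X` has the `Hyp_n(⋆)`-property if for any `n` (distinct)
cyclically ordered hyperplanes `H₁, …, Hₙ` such that `L(H_i, H_j) ∈ X` for every
`j ∉ {i-1, i, i+1}` (indices mod `n`), some consecutive pair spans a line of `X`. -/
def HypStar {V : Type*} (G : SimpleGraph V) (n : ℕ) : Prop :=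
  ∀ H : ZMod n → V, Function.Injective H →
    (∀ i j : ZMod n, j ≠ i - 1 → j ≠ i → j ≠ i + 1 → G.Adj (H i) (H j)) →
    ∃ u : ZMod n, G.Adj (H u) (H (u + 1))

/-- The graph is tripartite: its vertices (the hyperplanes) have one of three types,
and edges (lines of `X`) only join hyperplanes of distinct types. -/
def TripartiteGraph {V : Type*} (G : SimpleGraph V) (col : V → Fin 3) : Prop :=
  ∀ u v : V, G.Adj u v → col u ≠ col v

/-- Auxiliary: small nonzero numerals are nonzero in `ZMod n` for `n > 6`. -/
lemma zmod_cast_ne_zero {n : ℕ} (hn : 6 < n) (k : ℕ) (hk : 0 < k) (hk6 : k ≤ 6) :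
    ((k : ℕ) : ZMod n) ≠ 0 := by
  haveI : NeZero n := ⟨by omega⟩
  intro h
  rw [ZMod.natCast_eq_zero_iff] at h
  have := Nat.le_of_dvd hk h
  omega

/-- Every variety of lines `X` in `ℙ¹×ℙ¹×ℙ¹` has the
`Hyp_n(⋆)`-property for every `n > 6`. -/
theorem hypStar_of_six_lt {V : Type*} (G : SimpleGraph V) (col : V → Fin 3)
    (hG : TripartiteGraph G col) (n : ℕ) (hn : 6 < n) : HypStar G n := by
  intro H hinj hadj
  exfalso
  haveI : NeZero n := ⟨by omega⟩
  -- pigeonhole: three indices with the same color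
  have hcard : Fintype.card (Fin 3) * 2 < Fintype.card (ZMod n) := by
    rw [ZMod.card]
    simp only [Fintype.card_fin]
    omega
  obtain ⟨y, hy⟩ := Fintype.exists_lt_card_fiber_of_mul_lt_card
    (fun i => col (H i)) hcard
  rw [Finset.two_lt_card] at hy
  obtain ⟨a, ha, b, hb, c, hc, hab, hac, hbc⟩ := hy
  simp only [Finset.mem_filter] at ha hb hc
  -- same-colored distinct indices must be cyclically adjacent
  have key : ∀ i j : ZMod n, i ≠ j → col (H i) = col (H j) →
      j = i - 1 ∨ j = i + 1 := by
    intro i j hij hcol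
    by_contra h
    push_neg at h
    exact hG _ _ (hadj i j h.1 (fun e => hij e.symm) h.2) hcol
  have cab : col (H a) = col (H b) := by rw [ha.2, hb.2]
  have cac : col (H a) = col (H c) := by rw [ha.2, hc.2]
  have cbc : col (H b) = col (H c) := by rw [hb.2, hc.2]
  have kab := key a b hab cab
  have kac := key a c hac cac
  have kbc := key b c hbc cbc
  have one : ((1 : ℕ) : ZMod n) ≠ 0 := zmod_cast_ne_zero hn 1 one_pos (by norm_num)
  have two : ((2 : ℕ) : ZMod n) ≠ 0 := zmod_cast_ne_zero hn 2 two_pos (by norm_num)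
  have three : ((3 : ℕ) : ZMod n) ≠ 0 := zmod_cast_ne_zero hn 3 three_pos (by norm_num)
  push_cast at one two three
  rcases kab with hb1 | hb1 <;> rcases kac with hc1 | hc1 <;>
    rcases kbc with hc2 | hc2 <;> subst hb1 <;> subst hc1 <;>
    first
      | exact hbc rfl
      | exact one (by linear_combination hc2)
      | exact one (by linear_combination -hc2)
      | exact two (by linear_combination hc2)
      | exact two (by linear_combination -hc2)
      | exact three (by linear_combination hc2)
      | exact three (by linear_combination -hc2)
end

section
/- A tripartite graph G has the property that its complement G^c is chordal if and only if G satisfies the Hyp_n(⋆)-property for n = 4, 5, 6 (where Hyp_n(⋆) means: for any cyclically ordered vertices v₁,…,v_n with {v_i,v_j} ∈ E(G) for all j ∉ {i−1,i,i+1} mod n, some {v_u,v_{u+1}} ∈ E(G)). -/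
/-- A graph is chordal if every (injective) cycle of length at least `4` has a chord. -/
def ChordalGraph {V : Type*} (G : SimpleGraph V) : Prop :=
  ∀ n : ℕ, 4 ≤ n → ∀ v : ZMod n → V, Function.Injective v →
    (∀ i : ZMod n, G.Adj (v i) (v (i + 1))) →
    ∃ i j : ZMod n, j ≠ i - 1 ∧ j ≠ i ∧ j ≠ i + 1 ∧ G.Adj (v i) (v j)

/-- If `G` satisfies `Hyp_n(⋆)`, then every injective `n`-cycle in `Gᶜ` has a chord. -/
lemma hypStar_chord {V : Type*} (G : SimpleGraph V) {n : ℕ} (h : HypStar G n)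
    (v : ZMod n → V) (hinj : Function.Injective v)
    (hcyc : ∀ i : ZMod n, Gᶜ.Adj (v i) (v (i + 1))) :
    ∃ i j : ZMod n, j ≠ i - 1 ∧ j ≠ i ∧ j ≠ i + 1 ∧ Gᶜ.Adj (v i) (v j) := by
  by_contra hc
  push_neg at hc
  have hadj : ∀ i j : ZMod n, j ≠ i - 1 → j ≠ i → j ≠ i + 1 → G.Adj (v i) (v j) := by
    intro i j h1 h2 h3
    have hne : v i ≠ v j := fun he => h2 (hinj he).symm
    have := hc i j h1 h2 h3
    rw [SimpleGraph.compl_adj] at this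
    push_neg at this
    exact this hne
  obtain ⟨u, hu⟩ := h v hinj hadj
  exact (hcyc u).2 hu

/-- Pigeonhole: for `n ≥ 7`, some two vertices at circular distance at least 2
get the same color. -/
lemma exists_far_same_color {n : ℕ} (hn : 7 ≤ n) (f : ZMod n → Fin 3) :
    ∃ i j : ZMod n, j ≠ i - 1 ∧ j ≠ i ∧ j ≠ i + 1 ∧ f i = f j := by
  haveI : NeZero n := ⟨by omega⟩
  haveI : Fact (1 < n) := ⟨by omega⟩
  by_contra hc
  push_neg at hc
  have hone : (1 : ZMod n) ≠ 0 := one_ne_zero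
  have hthree : (3 : ZMod n) ≠ 0 := by
    intro h
    have : ((3 : ℕ) : ZMod n) = 0 := by push_cast; exact h
    have := (ZMod.natCast_eq_zero_iff 3 n).mp this
    have := Nat.le_of_dvd (by norm_num) this
    omega
  have near : ∀ a b : ZMod n, a ≠ b → f a = f b → b = a - 1 ∨ b = a + 1 := by
    intro a b hab hf
    by_contra hnb
    push_neg at hnb
    exact hc a b hnb.1 (Ne.symm hab) hnb.2 hf
  have hfib : ∀ c : Fin 3, (Finset.univ.filter (fun i : ZMod n => f i = c)).card ≤ 2 := by
    intro c
    by_contra hcard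
    push_neg at hcard
    obtain ⟨a, b, d, ha, hb, hd, hab, had, hbd⟩ := Finset.two_lt_card_iff.mp hcard
    simp only [Finset.mem_filter] at ha hb hd
    have nab := near a b hab (ha.2.trans hb.2.symm)
    have nad := near a d had (ha.2.trans hd.2.symm)
    have nbd := near b d hbd (hb.2.trans hd.2.symm)
    rcases nab with h1 | h1 <;> rcases nad with h2 | h2
    · exact hbd (h1.trans h2.symm)
    · rcases nbd with h3 | h3
      · apply hthree; subst h1 h2; linear_combination h3
      · apply hone; subst h1 h2; linear_combination h3
    · rcases nbd with h3 | h3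
      · apply hone; subst h1 h2; linear_combination - h3
      · apply hthree; subst h1 h2; linear_combination - h3
    · exact hbd (h1.trans h2.symm)
  have hcardZ : Fintype.card (ZMod n) = n := ZMod.card n
  have hsum : (Finset.univ : Finset (ZMod n)).card =
      ∑ c : Fin 3, (Finset.univ.filter (fun i : ZMod n => f i = c)).card :=
    Finset.card_eq_sum_card_fiberwise (fun i _ => Finset.mem_univ (f i))
  have : n ≤ 6 := by
    have h6 : ∑ c : Fin 3, (Finset.univ.filter (fun i : ZMod n => f i = c)).card ≤ 6 := by
      calc ∑ c : Fin 3, (Finset.univ.filter (fun i : ZMod n => f i = c)).card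
          ≤ ∑ _c : Fin 3, 2 := Finset.sum_le_sum (fun c _ => hfib c)
        _ = 6 := by simp
    calc n = Fintype.card (ZMod n) := hcardZ.symm
      _ = (Finset.univ : Finset (ZMod n)).card := (Finset.card_univ).symm
      _ ≤ 6 := hsum ▸ h6
  omega

/-- for a tripartite graph `G`, the complement `Gᶜ` is chordal iff
`G` has the `Hyp_n(⋆)`-property for `n = 4, 5, 6`. -/
theorem complement_chordal_iff_hypStar {V : Type*} (G : SimpleGraph V) (col : V → Fin 3)
    (hG : TripartiteGraph G col) :
    ChordalGraph Gᶜ ↔ (HypStar G 4 ∧ HypStar G 5 ∧ HypStar G 6) := by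
  constructor
  · intro hch
    have key : ∀ n : ℕ, 4 ≤ n → HypStar G n := by
      intro n hn H hinj hadj
      haveI : NeZero n := ⟨by omega⟩
      haveI : Fact (1 < n) := ⟨by omega⟩
      by_contra hno
      push_neg at hno
      have hcyc : ∀ i : ZMod n, Gᶜ.Adj (H i) (H (i + 1)) := by
        intro i
        rw [SimpleGraph.compl_adj]
        refine ⟨fun he => ?_, hno i⟩
        have : i = i + 1 := hinj he
        have h1 : (1 : ZMod n) = 0 := by linear_combination - this
        exact one_ne_zero h1
      obtain ⟨i, j, h1, h2, h3, hadj'⟩ := hch n hn H hinj hcyc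
      exact hadj'.2 (hadj i j h1 h2 h3)
    exact ⟨key 4 (by norm_num), key 5 (by norm_num), key 6 (by norm_num)⟩
  · rintro ⟨h4, h5, h6⟩ n hn v hinj hcyc
    by_cases hle : n ≤ 6
    · interval_cases n
      · exact hypStar_chord G h4 v hinj hcyc
      · exact hypStar_chord G h5 v hinj hcyc
      · exact hypStar_chord G h6 v hinj hcyc
    · obtain ⟨i, j, h1, h2, h3, hcol⟩ := exists_far_same_color (n := n) (by omega)
        (fun i => col (v i))
      refine ⟨i, j, h1, h2, h3, ?_⟩
      rw [SimpleGraph.compl_adj]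
      exact ⟨fun he => h2 (hinj he).symm, fun hadj => hG _ _ hadj hcol⟩
end

section
/- Let X be a variety of lines in ℙ¹×ℙ¹×ℙ¹, modeled as a tripartite graph G_X on vertex sets {a₁,…,a_{d₁}}, {b₁,…,b_{d₂}}, {c₁,…,c_{d₃}}. Define multiplicities μ_{ijk} = number of edges among {a_i b_j, a_i c_k, b_j c_k} present in G_X. Then X fails the Hyp₆(⋆)-property if and only if there exist indices a₁,a₂ ∈ [d₁], b₁,b₂ ∈ [d₂], c₁,c₂ ∈ [d₃] such that the 2×2 matrix (μ_{a_r b_s c₁})_{r,s} equals [[3,2],[2,2]] and (μ_{a_r b_s c₂})_{r,s} equals [[2,2],[2,3]]. -/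
/-- The tripartite graph `G_X` of a variety of lines `X`, built from the incidence data
`Eab i j ↔ L(A_i,B_j) ∈ X`, `Eac i k ↔ L(A_i,C_k) ∈ X`, `Ebc j k ↔ L(B_j,C_k) ∈ X`. -/
def lineGraph {d₁ d₂ d₃ : ℕ} (Eab : Fin d₁ → Fin d₂ → Bool) (Eac : Fin d₁ → Fin d₃ → Bool)
    (Ebc : Fin d₂ → Fin d₃ → Bool) : SimpleGraph (Fin d₁ ⊕ Fin d₂ ⊕ Fin d₃) :=
  SimpleGraph.fromRel fun x y =>
    match x, y with
    | Sum.inl i, Sum.inr (Sum.inl j) => Eab i j = true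
    | Sum.inl i, Sum.inr (Sum.inr k) => Eac i k = true
    | Sum.inr (Sum.inl j), Sum.inr (Sum.inr k) => Ebc j k = true
    | _, _ => False

/-- The multiplicity `μ_{ijk}` of the point `P_{ijk}`: the number of lines of `X`
passing through it, i.e. the number of edges of the triangle `{a_i, b_j, c_k}`
present in `G_X`. -/
def mu {d₁ d₂ d₃ : ℕ} (Eab : Fin d₁ → Fin d₂ → Bool) (Eac : Fin d₁ → Fin d₃ → Bool)
    (Ebc : Fin d₂ → Fin d₃ → Bool) (i : Fin d₁) (j : Fin d₂) (k : Fin d₃) : ℕ :=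
  (cond (Eab i j) 1 0) + (cond (Eac i k) 1 0) + (cond (Ebc j k) 1 0)

lemma zmod6_cases : ∀ i : ZMod 6, i = 0 ∨ i = 1 ∨ i = 2 ∨ i = 3 ∨ i = 4 ∨ i = 5 := by decide

lemma not_hypStar_hexagon {V : Type*} (G : SimpleGraph V) (v0 v1 v2 v3 v4 v5 : V)
    (d01 : v0 ≠ v1) (d12 : v1 ≠ v2) (d23 : v2 ≠ v3)
    (d34 : v3 ≠ v4) (d45 : v4 ≠ v5) (d50 : v5 ≠ v0)
    (h02 : G.Adj v0 v2) (h03 : G.Adj v0 v3) (h04 : G.Adj v0 v4)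
    (h13 : G.Adj v1 v3) (h14 : G.Adj v1 v4) (h15 : G.Adj v1 v5)
    (h24 : G.Adj v2 v4) (h25 : G.Adj v2 v5) (h35 : G.Adj v3 v5)
    (n01 : ¬ G.Adj v0 v1) (n12 : ¬ G.Adj v1 v2) (n23 : ¬ G.Adj v2 v3)
    (n34 : ¬ G.Adj v3 v4) (n45 : ¬ G.Adj v4 v5) (n50 : ¬ G.Adj v5 v0) :
    ¬ HypStar G 6 := by
  intro h
  have d02 := h02.ne; have d03 := h03.ne; have d04 := h04.ne
  have d13 := h13.ne; have d14 := h14.ne; have d15 := h15.ne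
  have d24 := h24.ne; have d25 := h25.ne; have d35 := h35.ne
  obtain ⟨u, hu⟩ := h (fun i : ZMod 6 =>
      if i.val = 0 then v0 else if i.val = 1 then v1 else if i.val = 2 then v2
      else if i.val = 3 then v3 else if i.val = 4 then v4 else v5)
    (by
      intro i j hij
      rcases zmod6_cases i with rfl|rfl|rfl|rfl|rfl|rfl <;>
      rcases zmod6_cases j with rfl|rfl|rfl|rfl|rfl|rfl <;>
      simp only [show ((0:ZMod 6)).val = 0 from rfl, show ((1:ZMod 6)).val = 1 from rfl,
        show ((2:ZMod 6)).val = 2 from rfl, show ((3:ZMod 6)).val = 3 from rfl,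
        show ((4:ZMod 6)).val = 4 from rfl, show ((5:ZMod 6)).val = 5 from rfl] at hij <;>
      norm_num at hij ⊢ <;>
        first
          | rfl
          | exact absurd hij d01 | exact absurd hij d12 | exact absurd hij d23
          | exact absurd hij d34 | exact absurd hij d45 | exact absurd hij d50.symm
          | exact absurd hij d02 | exact absurd hij d03 | exact absurd hij d04
          | exact absurd hij d13 | exact absurd hij d14 | exact absurd hij d15
          | exact absurd hij d24 | exact absurd hij d25 | exact absurd hij d35
          | exact absurd hij d01.symm | exact absurd hij d12.symm | exact absurd hij d23.symm
          | exact absurd hij d34.symm | exact absurd hij d45.symm | exact absurd hij d50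
          | exact absurd hij d02.symm | exact absurd hij d03.symm | exact absurd hij d04.symm
          | exact absurd hij d13.symm | exact absurd hij d14.symm | exact absurd hij d15.symm
          | exact absurd hij d24.symm | exact absurd hij d25.symm | exact absurd hij d35.symm)
    (by
      intro i j h1 h2 h3
      rcases zmod6_cases i with rfl|rfl|rfl|rfl|rfl|rfl <;>
      rcases zmod6_cases j with rfl|rfl|rfl|rfl|rfl|rfl <;>
        first
          | exact absurd (by decide) h1
          | exact absurd (by decide) h2
          | exact absurd (by decide) h3
          | exact h02 | exact h03 | exact h04 | exact h13 | exact h14 | exact h15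
          | exact h24 | exact h25 | exact h35
          | exact h02.symm | exact h03.symm | exact h04.symm | exact h13.symm
          | exact h14.symm | exact h15.symm | exact h24.symm | exact h25.symm
          | exact h35.symm)
  rcases zmod6_cases u with rfl|rfl|rfl|rfl|rfl|rfl
  · exact n01 hu
  · exact n12 hu
  · exact n23 hu
  · exact n34 hu
  · exact n45 hu
  · exact n50 hu

section Aux

variable {d₁ d₂ d₃ : ℕ} {Eab : Fin d₁ → Fin d₂ → Bool} {Eac : Fin d₁ → Fin d₃ → Bool}
  {Ebc : Fin d₂ → Fin d₃ → Bool}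

lemma adj_ab {i : Fin d₁} {j : Fin d₂} (h : Eab i j = true) :
    (lineGraph Eab Eac Ebc).Adj (Sum.inl i) (Sum.inr (Sum.inl j)) := by
  simp [lineGraph, h]

lemma adj_ac {i : Fin d₁} {k : Fin d₃} (h : Eac i k = true) :
    (lineGraph Eab Eac Ebc).Adj (Sum.inl i) (Sum.inr (Sum.inr k)) := by
  simp [lineGraph, h]

lemma adj_bc {j : Fin d₂} {k : Fin d₃} (h : Ebc j k = true) :
    (lineGraph Eab Eac Ebc).Adj (Sum.inr (Sum.inl j)) (Sum.inr (Sum.inr k)) := by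
  simp [lineGraph, h]

lemma nadj_ab {i : Fin d₁} {j : Fin d₂} (h : Eab i j = false) :
    ¬ (lineGraph Eab Eac Ebc).Adj (Sum.inl i) (Sum.inr (Sum.inl j)) := by
  simp [lineGraph, h]

lemma nadj_ac {i : Fin d₁} {k : Fin d₃} (h : Eac i k = false) :
    ¬ (lineGraph Eab Eac Ebc).Adj (Sum.inl i) (Sum.inr (Sum.inr k)) := by
  simp [lineGraph, h]

lemma nadj_bc {j : Fin d₂} {k : Fin d₃} (h : Ebc j k = false) :
    ¬ (lineGraph Eab Eac Ebc).Adj (Sum.inr (Sum.inl j)) (Sum.inr (Sum.inr k)) := by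
  simp [lineGraph, h]

lemma nadj_aa {i i' : Fin d₁} : ¬ (lineGraph Eab Eac Ebc).Adj (Sum.inl i) (Sum.inl i') := by
  simp [lineGraph]

lemma nadj_bb {j j' : Fin d₂} :
    ¬ (lineGraph Eab Eac Ebc).Adj (Sum.inr (Sum.inl j)) (Sum.inr (Sum.inl j')) := by
  simp [lineGraph]

lemma nadj_cc {k k' : Fin d₃} :
    ¬ (lineGraph Eab Eac Ebc).Adj (Sum.inr (Sum.inr k)) (Sum.inr (Sum.inr k')) := by
  simp [lineGraph]

end Aux

set_option maxHeartbeats 4000000 in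
/-- `X` fails the `Hyp₆(⋆)`-property iff there are indices
`a₁, a₂, b₁, b₂, c₁, c₂` such that the 2×2 matrix of multiplicities on level `c₁` is
`[[3,2],[2,2]]` and on level `c₂` is `[[2,2],[2,3]]`. -/
theorem not_hyp6_iff_mu_matrices {d₁ d₂ d₃ : ℕ}
    (Eab : Fin d₁ → Fin d₂ → Bool) (Eac : Fin d₁ → Fin d₃ → Bool)
    (Ebc : Fin d₂ → Fin d₃ → Bool) :
    ¬ HypStar (lineGraph Eab Eac Ebc) 6 ↔
      ∃ (a₁ a₂ : Fin d₁) (b₁ b₂ : Fin d₂) (c₁ c₂ : Fin d₃),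
        mu Eab Eac Ebc a₁ b₁ c₁ = 3 ∧ mu Eab Eac Ebc a₁ b₂ c₁ = 2 ∧
        mu Eab Eac Ebc a₂ b₁ c₁ = 2 ∧ mu Eab Eac Ebc a₂ b₂ c₁ = 2 ∧
        mu Eab Eac Ebc a₁ b₁ c₂ = 2 ∧ mu Eab Eac Ebc a₁ b₂ c₂ = 2 ∧
        mu Eab Eac Ebc a₂ b₁ c₂ = 2 ∧ mu Eab Eac Ebc a₂ b₂ c₂ = 3 := by
  constructor
  · -- forward direction
    intro h
    unfold HypStar at h
    push_neg at h
    obtain ⟨H, hinj, hadj, hnadj⟩ := h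
    have h02 := hadj 0 2 (by decide) (by decide) (by decide)
    have h03 := hadj 0 3 (by decide) (by decide) (by decide)
    have h04 := hadj 0 4 (by decide) (by decide) (by decide)
    have h13 := hadj 1 3 (by decide) (by decide) (by decide)
    have h14 := hadj 1 4 (by decide) (by decide) (by decide)
    have h15 := hadj 1 5 (by decide) (by decide) (by decide)
    have h24 := hadj 2 4 (by decide) (by decide) (by decide)
    have h25 := hadj 2 5 (by decide) (by decide) (by decide)
    have h35 := hadj 3 5 (by decide) (by decide) (by decide)
    have n01 := hnadj 0
    have n12 := hnadj 1
    have n23 := hnadj 2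
    have n34 := hnadj 3
    have n45 := hnadj 4
    have n50 := hnadj 5
    rw [show ((0:ZMod 6)+1) = 1 from by decide] at n01
    rw [show ((1:ZMod 6)+1) = 2 from by decide] at n12
    rw [show ((2:ZMod 6)+1) = 3 from by decide] at n23
    rw [show ((3:ZMod 6)+1) = 4 from by decide] at n34
    rw [show ((4:ZMod 6)+1) = 5 from by decide] at n45
    rw [show ((5:ZMod 6)+1) = 0 from by decide] at n50
    clear hinj hadj hnadj
    revert h02 h03 h04 h13 h14 h15 h24 h25 h35 n01 n12 n23 n34 n45 n50
    generalize H 0 = v0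
    generalize H 1 = v1
    generalize H 2 = v2
    generalize H 3 = v3
    generalize H 4 = v4
    generalize H 5 = v5
    clear H
    rcases v0 with x0 | x0 | x0 <;>
    rcases v1 with x1 | x1 | x1 <;>
    rcases v2 with x2 | x2 | x2 <;>
    rcases v3 with x3 | x3 | x3 <;>
    rcases v4 with x4 | x4 | x4 <;>
    rcases v5 with x5 | x5 | x5 <;>
      (intro h02 h03 h04 h13 h14 h15 h24 h25 h35 n01 n12 n23 n34 n45 n50 <;>
        simp only [lineGraph, SimpleGraph.fromRel_adj, ne_eq, reduceCtorEq,
          not_false_eq_true, true_and, or_false, false_or, or_self, not_true_eq_false, and_false, false_and, and_true,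
          Bool.not_eq_true, Sum.inr.injEq, Sum.inl.injEq] at h02 h03 h04 h13 h14 h15 h24 h25 h35 n01 n12 n23 n34 n45 n50 <;>
          first
                      | (refine ⟨x0, x1, x2, x3, x4, x5, ?_, ?_, ?_, ?_, ?_, ?_, ?_, ?_⟩ <;> simp [mu, *])
                      | (refine ⟨x0, x1, x4, x5, x2, x3, ?_, ?_, ?_, ?_, ?_, ?_, ?_, ?_⟩ <;> simp [mu, *])
                      | (refine ⟨x2, x3, x0, x1, x4, x5, ?_, ?_, ?_, ?_, ?_, ?_, ?_, ?_⟩ <;> simp [mu, *])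
                      | (refine ⟨x2, x3, x4, x5, x0, x1, ?_, ?_, ?_, ?_, ?_, ?_, ?_, ?_⟩ <;> simp [mu, *])
                      | (refine ⟨x4, x5, x0, x1, x2, x3, ?_, ?_, ?_, ?_, ?_, ?_, ?_, ?_⟩ <;> simp [mu, *])
                      | (refine ⟨x4, x5, x2, x3, x0, x1, ?_, ?_, ?_, ?_, ?_, ?_, ?_, ?_⟩ <;> simp [mu, *])
                      | (refine ⟨x1, x0, x3, x2, x5, x4, ?_, ?_, ?_, ?_, ?_, ?_, ?_, ?_⟩ <;> simp [mu, *])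
                      | (refine ⟨x1, x0, x5, x4, x3, x2, ?_, ?_, ?_, ?_, ?_, ?_, ?_, ?_⟩ <;> simp [mu, *])
                      | (refine ⟨x3, x2, x1, x0, x5, x4, ?_, ?_, ?_, ?_, ?_, ?_, ?_, ?_⟩ <;> simp [mu, *])
                      | (refine ⟨x3, x2, x5, x4, x1, x0, ?_, ?_, ?_, ?_, ?_, ?_, ?_, ?_⟩ <;> simp [mu, *])
                      | (refine ⟨x5, x4, x1, x0, x3, x2, ?_, ?_, ?_, ?_, ?_, ?_, ?_, ?_⟩ <;> simp [mu, *])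
                      | (refine ⟨x5, x4, x3, x2, x1, x0, ?_, ?_, ?_, ?_, ?_, ?_, ?_, ?_⟩ <;> simp [mu, *])
                      | (refine ⟨x2, x1, x4, x3, x0, x5, ?_, ?_, ?_, ?_, ?_, ?_, ?_, ?_⟩ <;> simp [mu, *])
                      | (refine ⟨x2, x1, x0, x5, x4, x3, ?_, ?_, ?_, ?_, ?_, ?_, ?_, ?_⟩ <;> simp [mu, *])
                      | (refine ⟨x4, x3, x2, x1, x0, x5, ?_, ?_, ?_, ?_, ?_, ?_, ?_, ?_⟩ <;> simp [mu, *])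
                      | (refine ⟨x4, x3, x0, x5, x2, x1, ?_, ?_, ?_, ?_, ?_, ?_, ?_, ?_⟩ <;> simp [mu, *])
                      | (refine ⟨x0, x5, x2, x1, x4, x3, ?_, ?_, ?_, ?_, ?_, ?_, ?_, ?_⟩ <;> simp [mu, *])
                      | (refine ⟨x0, x5, x4, x3, x2, x1, ?_, ?_, ?_, ?_, ?_, ?_, ?_, ?_⟩ <;> simp [mu, *])
                      | (refine ⟨x1, x2, x3, x4, x5, x0, ?_, ?_, ?_, ?_, ?_, ?_, ?_, ?_⟩ <;> simp [mu, *])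
                      | (refine ⟨x1, x2, x5, x0, x3, x4, ?_, ?_, ?_, ?_, ?_, ?_, ?_, ?_⟩ <;> simp [mu, *])
                      | (refine ⟨x3, x4, x1, x2, x5, x0, ?_, ?_, ?_, ?_, ?_, ?_, ?_, ?_⟩ <;> simp [mu, *])
                      | (refine ⟨x3, x4, x5, x0, x1, x2, ?_, ?_, ?_, ?_, ?_, ?_, ?_, ?_⟩ <;> simp [mu, *])
                      | (refine ⟨x5, x0, x1, x2, x3, x4, ?_, ?_, ?_, ?_, ?_, ?_, ?_, ?_⟩ <;> simp [mu, *])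
                      | (refine ⟨x5, x0, x3, x4, x1, x2, ?_, ?_, ?_, ?_, ?_, ?_, ?_, ?_⟩ <;> simp [mu, *]))
  · -- backward direction
    rintro ⟨a₁, a₂, b₁, b₂, c₁, c₂, m1, m2, m3, m4, m5, m6, m7, m8⟩
    simp only [mu] at m1 m2 m3 m4 m5 m6 m7 m8
    obtain ⟨e1, e2, e3⟩ : Eab a₁ b₁ = true ∧ Eac a₁ c₁ = true ∧ Ebc b₁ c₁ = true := by
      revert m1; cases Eab a₁ b₁ <;> cases Eac a₁ c₁ <;> cases Ebc b₁ c₁ <;> decide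
    obtain ⟨f1, f2, f3⟩ : Eab a₂ b₂ = true ∧ Eac a₂ c₂ = true ∧ Ebc b₂ c₂ = true := by
      revert m8; cases Eab a₂ b₂ <;> cases Eac a₂ c₂ <;> cases Ebc b₂ c₂ <;> decide
    rw [e2] at m2; rw [e3] at m3; rw [f1] at m4; rw [e1] at m5; rw [f3] at m6; rw [f2] at m7
    have g1 : Ebc b₂ c₁ = !(Eab a₁ b₂) := by
      revert m2; cases Eab a₁ b₂ <;> cases Ebc b₂ c₁ <;> decide
    have g2 : Eac a₂ c₁ = !(Ebc b₂ c₁) := by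
      revert m4; cases Eac a₂ c₁ <;> cases Ebc b₂ c₁ <;> decide
    have g3 : Eab a₂ b₁ = !(Eac a₂ c₁) := by
      revert m3; cases Eab a₂ b₁ <;> cases Eac a₂ c₁ <;> decide
    have g5 : Eac a₁ c₂ = !(Eab a₁ b₂) := by
      revert m6; cases Eab a₁ b₂ <;> cases Eac a₁ c₂ <;> decide
    have g4 : Ebc b₁ c₂ = !(Eac a₁ c₂) := by
      revert m5; cases Eac a₁ c₂ <;> cases Ebc b₁ c₂ <;> decide
    cases ht : Eab a₁ b₂ with
    | true =>
      rw [ht, Bool.not_true] at g1 g5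
      rw [g1, Bool.not_false] at g2
      rw [g2, Bool.not_true] at g3
      rw [g5, Bool.not_false] at g4
      have hne_a : a₁ ≠ a₂ := by
        intro hh; rw [hh, g3] at e1; exact absurd e1 (by decide)
      have hne_b : b₁ ≠ b₂ := by
        intro hh; rw [hh, g1] at e3; exact absurd e3 (by decide)
      have hne_c : c₁ ≠ c₂ := by
        intro hh; rw [hh, g5] at e2; exact absurd e2 (by decide)
      exact not_hypStar_hexagon (lineGraph Eab Eac Ebc)
        (Sum.inl a₁) (Sum.inl a₂) (Sum.inr (Sum.inl b₁)) (Sum.inr (Sum.inl b₂))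
        (Sum.inr (Sum.inr c₁)) (Sum.inr (Sum.inr c₂))
        (by simp [hne_a]) (by simp) (by simp [hne_b]) (by simp) (by simp [hne_c]) (by simp)
        (adj_ab e1) (adj_ab ht) (adj_ac e2) (adj_ab f1) (adj_ac g2) (adj_ac f2)
        (adj_bc e3) (adj_bc g4) (adj_bc f3)
        nadj_aa (nadj_ab g3) nadj_bb (nadj_bc g1) nadj_cc
        (fun hh => nadj_ac g5 hh.symm)
    | false =>
      rw [ht, Bool.not_false] at g1 g5
      rw [g1, Bool.not_true] at g2
      rw [g2, Bool.not_false] at g3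
      rw [g5, Bool.not_true] at g4
      have hne_a : a₁ ≠ a₂ := by
        intro hh; rw [hh, g2] at e2; exact absurd e2 (by decide)
      have hne_b : b₁ ≠ b₂ := by
        intro hh; rw [hh] at g4; rw [g4] at f3; exact absurd f3 (by decide)
      have hne_c : c₁ ≠ c₂ := by
        intro hh; rw [hh, g4] at e3; exact absurd e3 (by decide)
      exact not_hypStar_hexagon (lineGraph Eab Eac Ebc)
        (Sum.inl a₁) (Sum.inr (Sum.inl b₂)) (Sum.inr (Sum.inl b₁)) (Sum.inr (Sum.inr c₂))
        (Sum.inr (Sum.inr c₁)) (Sum.inl a₂)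
        (by simp) (by simp [hne_b.symm]) (by simp) (by simp [hne_c.symm]) (by simp) (by simp [hne_a.symm])
        (adj_ab e1) (adj_ac g5) (adj_ac e2) (adj_bc f3) (adj_bc g1)
        ((adj_ab f1).symm)
        (adj_bc e3) ((adj_ab g3).symm) ((adj_ac f2).symm)
        (nadj_ab ht) nadj_bb (nadj_bc g4) nadj_cc
        (fun hh => nadj_ac g2 hh.symm) nadj_aa
end

section
/- Let X be a Ferrers variety of lines in ℙ¹×ℙ¹×ℙ¹ and D̂(X) the set of minimal elements (under the componentwise order on ℕ³) of D(X) = { (max{a₃,a₂}, max{b₃,b₁}, max{c₁,c₂}) : (a₃,b₃,0) ∈ D₃(X), (a₂,0,c₂) ∈ D₂(X), (0,b₁,c₁) ∈ D₁(X) }. Then the ideal I_X is minimally generated by the products ∏_{i≤a} A_i · ∏_{j≤b} B_j · ∏_{k≤c} C_k for (a,b,c) ∈ D̂(X). -/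
open MvPolynomial

noncomputable section

/-- The weight giving the `t`-th component of the tridegree on
`R = K[x_{1,0},x_{1,1},x_{2,0},x_{2,1},x_{3,0},x_{3,1}]`. -/
def triWeight (t : Fin 3) : Fin 3 × Fin 2 → ℕ := fun p => if p.1 = t then 1 else 0

variable {K : Type*} [Field K]

/-- `F` is trihomogeneous of tridegree `d`. -/
def TriHomogeneous (F : MvPolynomial (Fin 3 × Fin 2) K) (d : Fin 3 → ℕ) : Prop :=
  ∀ t : Fin 3, F.IsWeightedHomogeneous (triWeight t) (d t)

/-- The ideal `⋂_{(i,j) ∈ U} (F_i, G_j)` of the lines indexed by `U` (for two of the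
three families of hyperplanes `F, G`). -/
def idealPart (F G : ℕ → MvPolynomial (Fin 3 × Fin 2) K) (U : Finset (ℕ × ℕ)) :
    Ideal (MvPolynomial (Fin 3 × Fin 2) K) :=
  ⨅ p ∈ U, Ideal.span {F p.1, G p.2}

/-- The ideal `I_X` of the variety of lines with index sets `U₃, U₂, U₁`. -/
def lineIdeal (A B C : ℕ → MvPolynomial (Fin 3 × Fin 2) K) (U₃ U₂ U₁ : Finset (ℕ × ℕ)) :
    Ideal (MvPolynomial (Fin 3 × Fin 2) K) :=
  idealPart A B U₃ ⊓ idealPart A C U₂ ⊓ idealPart B C U₁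

/-- The product `∏_{i ≤ a} A_i ∏_{j ≤ b} B_j ∏_{k ≤ c} C_k` (indices starting from 0). -/
def genProd (A B C : ℕ → MvPolynomial (Fin 3 × Fin 2) K) (a b c : ℕ) :
    MvPolynomial (Fin 3 × Fin 2) K :=
  (∏ i ∈ Finset.range a, A i) * (∏ j ∈ Finset.range b, B j) * (∏ k ∈ Finset.range c, C k)

/-- The set of degrees of the minimal generators of an ideal `I` among the nested
products `f d`: the minimal degrees `d` with `f d ∈ I`. -/
def minDegs (I : Ideal (MvPolynomial (Fin 3 × Fin 2) K))
    (f : ℕ × ℕ → MvPolynomial (Fin 3 × Fin 2) K) : Set (ℕ × ℕ) :=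
  {d | f d ∈ I ∧ ∀ d', f d' ∈ I → d' ≤ d → d' = d}

/-- The set `D(X)` of componentwise maxima of one degree from each of
`D₃(X), D₂(X), D₁(X)`. -/
def Dset (A B C : ℕ → MvPolynomial (Fin 3 × Fin 2) K) (U₃ U₂ U₁ : Finset (ℕ × ℕ)) :
    Set (ℕ × ℕ × ℕ) :=
  {t | ∃ p₃ ∈ minDegs (idealPart A B U₃) (fun d => genProd A B C d.1 d.2 0),
       ∃ p₂ ∈ minDegs (idealPart A C U₂) (fun d => genProd A B C d.1 0 d.2),
       ∃ p₁ ∈ minDegs (idealPart B C U₁) (fun d => genProd A B C 0 d.1 d.2),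
       t = (max p₃.1 p₂.1, max p₃.2 p₁.1, max p₂.2 p₁.2)}

/-- `D̂(X)`: the set of minimal elements of `D(X)` for the componentwise order. -/
def Dhat (A B C : ℕ → MvPolynomial (Fin 3 × Fin 2) K) (U₃ U₂ U₁ : Finset (ℕ × ℕ)) :
    Set (ℕ × ℕ × ℕ) :=
  {t ∈ Dset A B C U₃ U₂ U₁ | ∀ t' ∈ Dset A B C U₃ U₂ U₁, t' ≤ t → t' = t}

/-- linear form in the `t`-th pair of variables -/
def lf (t : Fin 3) (a b : K) : MvPolynomial (Fin 3 × Fin 2) K :=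
  C a * X (t, 0) + C b * X (t, 1)

lemma lf_zero (t : Fin 3) : lf t (0:K) 0 = 0 := by simp [lf]

lemma smul_lf (t : Fin 3) (s a b : K) : s • lf t a b = lf t (s*a) (s*b) := by
  simp [lf, smul_add, smul_eq_C_mul, C_mul]; ring

lemma coeff_lf₀ (t : Fin 3) (a b : K) :
    coeff (Finsupp.single (t,0) 1) (lf t a b) = a := by
  have h : (Finsupp.single ((t,(1:Fin 2))) 1 : (Fin 3 × Fin 2) →₀ ℕ) ≠ Finsupp.single (t,0) 1 := by
    intro h
    have := Finsupp.single_eq_single_iff _ _ _ _ |>.1 h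
    simp at this
  simp [lf, coeff_add, coeff_C_mul, coeff_X', h]

lemma coeff_lf₁ (t : Fin 3) (a b : K) :
    coeff (Finsupp.single (t,1) 1) (lf t a b) = b := by
  have h : (Finsupp.single ((t,(0:Fin 2))) 1 : (Fin 3 × Fin 2) →₀ ℕ) ≠ Finsupp.single (t,1) 1 := by
    intro h
    have := Finsupp.single_eq_single_iff _ _ _ _ |>.1 h
    simp at this
  simp [lf, coeff_add, coeff_C_mul, coeff_X', h]

/-- classification of monomials of tri-unit degree -/
lemma monomial_classify {t : Fin 3} {m : (Fin 3 × Fin 2) →₀ ℕ}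
    (h : ∀ t' : Fin 3, Finsupp.weight (triWeight t') m = if t' = t then 1 else 0) :
    m = Finsupp.single (t,0) 1 ∨ m = Finsupp.single (t,1) 1 := by
  have hoff : ∀ p : Fin 3 × Fin 2, p.1 ≠ t → m p = 0 := by
    intro p hp
    have h1 : m p ≤ Finsupp.weight (triWeight p.1) m := by
      apply Finsupp.le_weight
      simp [triWeight]
    rw [h p.1, if_neg hp] at h1
    omega
  have hdec : m = Finsupp.single (t,0) (m (t,0)) + Finsupp.single (t,1) (m (t,1)) := by
    ext p
    rcases p with ⟨u, j⟩
    by_cases hu : u = t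
    · subst hu
      fin_cases j <;>
        simp [Finsupp.single_apply, Prod.ext_iff]
    · have h1 : t ≠ u := Ne.symm hu
      simp [Finsupp.single_apply, Prod.ext_iff, hoff ⟨u,j⟩ hu, hu, h1]
  have hsum : m (t,0) + m (t,1) = 1 := by
    have := h t
    rw [if_pos rfl] at this
    rw [hdec] at this
    rw [map_add] at this
    have hs : ∀ j : Fin 2, Finsupp.weight (triWeight t) (Finsupp.single ((t,j)) (m (t,j)))
        = m (t,j) := by
      intro j
      rw [Finsupp.weight_apply, Finsupp.sum_single_index] <;> simp [triWeight]
    rw [hs 0, hs 1] at this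
    exact this
  rcases Nat.add_eq_one_iff.mp hsum with ⟨h0, h1⟩ | ⟨h0, h1⟩
  · right; rw [hdec, h0, h1]; simp
  · left; rw [hdec, h0, h1]; simp

lemma exists_lf {F : MvPolynomial (Fin 3 × Fin 2) K} {t : Fin 3}
    (h : TriHomogeneous F (fun t' => if t' = t then 1 else 0)) :
    ∃ a b, F = lf t a b := by
  refine ⟨coeff (Finsupp.single (t,0) 1) F, coeff (Finsupp.single (t,1) 1) F, ?_⟩
  apply MvPolynomial.ext
  intro m
  by_cases h0 : m = Finsupp.single (t,0) 1
  · subst h0; rw [coeff_lf₀]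
  by_cases h1 : m = Finsupp.single (t,1) 1
  · subst h1; rw [coeff_lf₁]
  have hm : coeff m F = 0 := by
    by_contra hc
    have := monomial_classify (t := t) (m := m) (fun t' => h t' hc)
    tauto
  rw [hm]
  have hne0 : (Finsupp.single ((t,(0:Fin 2))) 1 : (Fin 3 × Fin 2) →₀ ℕ) ≠ m := fun h' => h0 h'.symm
  have hne1 : (Finsupp.single ((t,(1:Fin 2))) 1 : (Fin 3 × Fin 2) →₀ ℕ) ≠ m := fun h' => h1 h'.symm
  simp [lf, coeff_add, coeff_C_mul, coeff_X', hne0, hne1]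


/-- If the cross product vanishes, the forms are proportional. -/
lemma prop_of_cross {t : Fin 3} {a b a' b' : K} (hab : ¬(a = 0 ∧ b = 0))
    (h : a' * b - b' * a = 0) : ∃ s : K, lf t a' b' = s • lf t a b := by
  by_cases ha : a = 0
  · have hb : b ≠ 0 := fun hb => hab ⟨ha, hb⟩
    refine ⟨b' / b, ?_⟩
    rw [smul_lf]
    have ha' : a' = 0 := by
      have h2 : a' * b = 0 := by rw [ha] at h; linear_combination h
      rcases mul_eq_zero.mp h2 with h' | h'
      · exact h'
      · exact absurd h' hb
    rw [ha, ha', mul_zero, div_mul_cancel₀ _ hb]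
  · refine ⟨a' / a, ?_⟩
    rw [smul_lf, div_mul_cancel₀ _ ha]
    congr 1
    field_simp
    linear_combination -h

lemma cross_of_not_prop {t : Fin 3} {a b a' b' : K} (hab : ¬(a = 0 ∧ b = 0))
    (h : ∀ s : K, lf t a' b' ≠ s • lf t a b) : a' * b - b' * a ≠ 0 := by
  intro hc
  obtain ⟨s, hs⟩ := prop_of_cross (t := t) hab hc
  exact h s hs

lemma eval_lf (x : Fin 3 × Fin 2 → K) (t : Fin 3) (a b : K) :
    eval x (lf t a b) = a * x (t,0) + b * x (t,1) := by
  simp [lf]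

/-- `F` is a nonzero linear form in the `t`-th pair of variables. -/
def IsForm (t : Fin 3) (F : MvPolynomial (Fin 3 × Fin 2) K) : Prop :=
  ∃ a b : K, F = lf t a b ∧ ¬(a = 0 ∧ b = 0)

lemma IsForm.ne_zero {t : Fin 3} {F : MvPolynomial (Fin 3 × Fin 2) K} (h : IsForm t F) :
    F ≠ 0 := by
  obtain ⟨a, b, rfl, hab⟩ := h
  intro h0
  apply hab
  constructor
  · have := congrArg (coeff (Finsupp.single (t,0) 1)) h0
    rwa [coeff_lf₀, coeff_zero] at this
  · have := congrArg (coeff (Finsupp.single (t,1) 1)) h0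
    rwa [coeff_lf₁, coeff_zero] at this

/-- Non-membership of a form in a pair ideal it is "independent" from. -/
lemma form_notMem_span_pair {t₁ t₂ t : Fin 3} (hne : t₁ ≠ t₂)
    {F G L : MvPolynomial (Fin 3 × Fin 2) K}
    (hF : IsForm t₁ F) (hG : IsForm t₂ G) (hL : IsForm t L)
    (h1 : t = t₁ → ∀ s : K, L ≠ s • F) (h2 : t = t₂ → ∀ s : K, L ≠ s • G) :
    L ∉ Ideal.span {F, G} := by
  obtain ⟨a₁, b₁, rfl, hab₁⟩ := hF
  obtain ⟨a₂, b₂, rfl, hab₂⟩ := hG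
  obtain ⟨a, b, rfl, hab⟩ := hL
  classical
  intro hmem
  obtain ⟨u, v, huv⟩ := Ideal.mem_span_pair.mp hmem
  -- evaluation point
  set x : Fin 3 × Fin 2 → K := fun p =>
    if p.1 = t₁ then (if p.2 = 0 then b₁ else -a₁)
    else if p.1 = t₂ then (if p.2 = 0 then b₂ else -a₂)
    else (if a = 0 then (if p.2 = 0 then 0 else 1) else (if p.2 = 0 then 1 else 0)) with hx
  have e1 : eval x (lf t₁ a₁ b₁) = 0 := by
    rw [eval_lf]; simp [hx]; ring
  have e2 : eval x (lf t₂ a₂ b₂) = 0 := by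
    rw [eval_lf]; simp [hx, hne, Ne.symm hne]; ring
  have e0 : eval x (lf t a b) = 0 := by
    have := congrArg (eval x) huv
    rw [map_add, map_mul, map_mul, e1, e2, mul_zero, mul_zero, add_zero] at this
    exact this.symm
  rw [eval_lf] at e0
  by_cases ht1 : t = t₁
  · subst ht1
    simp [hx] at e0
    have hcr := cross_of_not_prop hab₁ (h1 rfl)
    exact hcr (by linear_combination e0)
  by_cases ht2 : t = t₂
  · subst ht2
    simp [hx, ht1] at e0
    have hcr := cross_of_not_prop hab₂ (h2 rfl)
    exact hcr (by linear_combination e0)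
  · by_cases ha : a = 0
    · have hb : b ≠ 0 := fun hb => hab ⟨ha, hb⟩
      simp [hx, ht1, ht2, ha] at e0
      exact hb e0
    · simp [hx, ht1, ht2, ha] at e0


/-- substitution killing a nonzero linear form -/
lemma exists_killer (t : Fin 3) (a b : K) (hab : ¬(a = 0 ∧ b = 0)) :
    ∃ u : Fin 2 → MvPolynomial (Fin 3 × Fin 2) K,
      (∀ j, u j - X (t, j) ∈ Ideal.span {lf t a b}) ∧
      C a * u 0 + C b * u 1 = 0 := by
  by_cases ha : a = 0
  · have hb : b ≠ 0 := fun hb => hab ⟨ha, hb⟩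
    refine ⟨![X (t,0), X (t,1) - C b⁻¹ * lf t a b], ?_, ?_⟩
    · intro j
      fin_cases j
      · simp
      · simp only [Matrix.cons_val_one, Matrix.cons_val_zero, Matrix.head_cons, Fin.mk_one, sub_sub_cancel_left]
        exact Ideal.mem_span_singleton.mpr ⟨-C b⁻¹, by ring⟩
    · simp only [Matrix.cons_val_zero, Matrix.cons_val_one, Matrix.head_cons]
      rw [mul_sub]
      have h2 : C b * (C b⁻¹ * lf t a b) = lf t a b := by
        rw [← mul_assoc, ← C_mul, mul_inv_cancel₀ hb, C_1, one_mul]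
      rw [h2, lf, ha]
      simp
  · refine ⟨![X (t,0) - C a⁻¹ * lf t a b, X (t,1)], ?_, ?_⟩
    · intro j
      fin_cases j
      · simp only [Matrix.cons_val_zero, Fin.zero_eta, sub_sub_cancel_left]
        exact Ideal.mem_span_singleton.mpr ⟨-C a⁻¹, by ring⟩
      · simp
    · simp only [Matrix.cons_val_zero, Matrix.cons_val_one, Matrix.head_cons]
      rw [mul_sub]
      have h2 : C a * (C a⁻¹ * lf t a b) = lf t a b := by
        rw [← mul_assoc, ← C_mul, mul_inv_cancel₀ ha, C_1, one_mul]
      rw [h2, lf]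
      ring

/-- the span of two independent-direction forms is prime -/
lemma span_pair_isPrime {t₁ t₂ : Fin 3} (hne : t₁ ≠ t₂)
    {F G : MvPolynomial (Fin 3 × Fin 2) K} (hF : IsForm t₁ F) (hG : IsForm t₂ G) :
    (Ideal.span {F, G}).IsPrime := by
  classical
  obtain ⟨a₁, b₁, rfl, hab₁⟩ := hF
  obtain ⟨a₂, b₂, rfl, hab₂⟩ := hG
  obtain ⟨u, hu, hu0⟩ := exists_killer t₁ a₁ b₁ hab₁
  obtain ⟨v, hv, hv0⟩ := exists_killer t₂ a₂ b₂ hab₂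
  set P : Ideal (MvPolynomial (Fin 3 × Fin 2) K) := Ideal.span {lf t₁ a₁ b₁, lf t₂ a₂ b₂} with hP
  set f : Fin 3 × Fin 2 → MvPolynomial (Fin 3 × Fin 2) K := fun p =>
    if p.1 = t₁ then u p.2 else if p.1 = t₂ then v p.2 else X p with hf
  have hfval₁ : ∀ j, f (t₁, j) = u j := by intro j; simp [hf]
  have hfval₂ : ∀ j, f (t₂, j) = v j := by intro j; simp [hf, Ne.symm hne]
  have hsub1 : Ideal.span {lf t₁ a₁ b₁} ≤ P := by
    apply Ideal.span_mono; intro x hx; simp at hx; simp [hx]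
  have hsub2 : Ideal.span {lf t₂ a₂ b₂} ≤ P := by
    apply Ideal.span_mono; intro x hx; simp at hx; simp [hx]
  have hfX : ∀ p : Fin 3 × Fin 2, f p - X p ∈ P := by
    intro ⟨s, j⟩
    by_cases h1 : s = t₁
    · subst h1; rw [hfval₁]
      exact hsub1 (hu j)
    by_cases h2 : s = t₂
    · subst h2; rw [hfval₂]
      exact hsub2 (hv j)
    · simp only [hf, if_neg h1, if_neg h2, sub_self]
      exact P.zero_mem
  have hψ1 : aeval f (lf t₁ a₁ b₁) = 0 := by
    rw [lf, map_add, map_mul, map_mul, aeval_C, aeval_C, aeval_X, aeval_X, hfval₁, hfval₁]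
    simpa using hu0
  have hψ2 : aeval f (lf t₂ a₂ b₂) = 0 := by
    rw [lf, map_add, map_mul, map_mul, aeval_C, aeval_C, aeval_X, aeval_X, hfval₂, hfval₂]
    simpa using hv0
  have hkerP : ∀ q : MvPolynomial (Fin 3 × Fin 2) K, q - aeval f q ∈ P := by
    intro q
    induction q using MvPolynomial.induction_on with
    | C c => rw [aeval_C]; simp [algebraMap_eq]
    | add p q hp hq =>
        rw [map_add]
        have : p + q - (aeval f p + aeval f q) = (p - aeval f p) + (q - aeval f q) := by ring
        rw [this]; exact P.add_mem hp hq
    | mul_X p s hp =>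
        rw [map_mul, aeval_X]
        have : p * X s - aeval f p * f s = p * (X s - f s) + (p - aeval f p) * f s := by ring
        rw [this]
        exact P.add_mem (P.mul_mem_left p (by simpa using P.neg_mem (hfX s))) (P.mul_mem_right _ hp)
  have hPker : ∀ q, q ∈ P ↔ aeval f q = 0 := by
    intro q
    constructor
    · intro hq
      obtain ⟨c, d, hcd⟩ := Ideal.mem_span_pair.mp hq
      rw [← hcd, map_add, map_mul, map_mul, hψ1, hψ2, mul_zero, mul_zero, add_zero]
    · intro hq
      have := hkerP q
      rwa [hq, sub_zero] at this
  have : P = RingHom.ker ((aeval f : MvPolynomial (Fin 3 × Fin 2) K →ₐ[K]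
      MvPolynomial (Fin 3 × Fin 2) K) : MvPolynomial (Fin 3 × Fin 2) K →+*
      MvPolynomial (Fin 3 × Fin 2) K) := by
    ext q
    rw [RingHom.mem_ker]
    exact hPker q
  show P.IsPrime
  rw [this]
  exact RingHom.ker_isPrime _


section Fams

variable {A B C : ℕ → MvPolynomial (Fin 3 × Fin 2) K}

lemma genProd_dvd {a b c a' b' c' : ℕ} (ha : a ≤ a') (hb : b ≤ b') (hc : c ≤ c') :
    genProd A B C a b c ∣ genProd A B C a' b' c' := by
  unfold genProd
  exact mul_dvd_mul (mul_dvd_mul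
    (Finset.prod_dvd_prod_of_subset _ _ _ (Finset.range_subset_range.mpr ha))
    (Finset.prod_dvd_prod_of_subset _ _ _ (Finset.range_subset_range.mpr hb)))
    (Finset.prod_dvd_prod_of_subset _ _ _ (Finset.range_subset_range.mpr hc))

lemma genProd_ne_zero (hFA : ∀ n, IsForm 0 (A n)) (hFB : ∀ n, IsForm 1 (B n))
    (hFC : ∀ n, IsForm 2 (C n)) (a b c : ℕ) : genProd A B C a b c ≠ 0 := by
  unfold genProd
  refine mul_ne_zero (mul_ne_zero ?_ ?_) ?_ <;>
    exact Finset.prod_ne_zero_iff.mpr fun i _ => by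
      first
        | exact (hFA i).ne_zero
        | exact (hFB i).ne_zero
        | exact (hFC i).ne_zero

/-- easy membership: if the pair `(i,j)` is covered then the product is in the pair ideal -/
lemma genProd_mem_AB {i j a b c : ℕ} (h : i < a ∨ j < b) :
    genProd A B C a b c ∈ Ideal.span {A i, B j} := by
  rcases h with h | h
  · have hdvd : A i ∣ genProd A B C a b c := by
      unfold genProd
      exact Dvd.dvd.mul_right (Dvd.dvd.mul_right
        (Finset.dvd_prod_of_mem _ (Finset.mem_range.mpr h)) _) _
    obtain ⟨e, he⟩ := hdvd
    rw [he, mul_comm]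
    exact Ideal.mul_mem_left _ e (Ideal.subset_span (by simp))
  · have hdvd : B j ∣ genProd A B C a b c := by
      unfold genProd
      exact Dvd.dvd.mul_right (Dvd.dvd.mul_left
        (Finset.dvd_prod_of_mem _ (Finset.mem_range.mpr h)) _) _
    obtain ⟨e, he⟩ := hdvd
    rw [he, mul_comm]
    exact Ideal.mul_mem_left _ e (Ideal.subset_span (by simp))

lemma genProd_mem_AC {i k a b c : ℕ} (h : i < a ∨ k < c) :
    genProd A B C a b c ∈ Ideal.span {A i, C k} := by
  rcases h with h | h
  · have hdvd : A i ∣ genProd A B C a b c := by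
      unfold genProd
      exact Dvd.dvd.mul_right (Dvd.dvd.mul_right
        (Finset.dvd_prod_of_mem _ (Finset.mem_range.mpr h)) _) _
    obtain ⟨e, he⟩ := hdvd
    rw [he, mul_comm]
    exact Ideal.mul_mem_left _ e (Ideal.subset_span (by simp))
  · have hdvd : C k ∣ genProd A B C a b c := by
      unfold genProd
      exact Dvd.dvd.mul_left (Finset.dvd_prod_of_mem _ (Finset.mem_range.mpr h)) _
    obtain ⟨e, he⟩ := hdvd
    rw [he, mul_comm]
    exact Ideal.mul_mem_left _ e (Ideal.subset_span (by simp))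

lemma genProd_mem_BC {j k a b c : ℕ} (h : j < b ∨ k < c) :
    genProd A B C a b c ∈ Ideal.span {B j, C k} := by
  rcases h with h | h
  · have hdvd : B j ∣ genProd A B C a b c := by
      unfold genProd
      exact Dvd.dvd.mul_right (Dvd.dvd.mul_left
        (Finset.dvd_prod_of_mem _ (Finset.mem_range.mpr h)) _) _
    obtain ⟨e, he⟩ := hdvd
    rw [he, mul_comm]
    exact Ideal.mul_mem_left _ e (Ideal.subset_span (by simp))
  · have hdvd : C k ∣ genProd A B C a b c := by
      unfold genProd
      exact Dvd.dvd.mul_left (Finset.dvd_prod_of_mem _ (Finset.mem_range.mpr h)) _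
    obtain ⟨e, he⟩ := hdvd
    rw [he, mul_comm]
    exact Ideal.mul_mem_left _ e (Ideal.subset_span (by simp))

end Fams

section NotMem

variable {A B C : ℕ → MvPolynomial (Fin 3 × Fin 2) K}
variable (hFA : ∀ n, IsForm 0 (A n)) (hFB : ∀ n, IsForm 1 (B n)) (hFC : ∀ n, IsForm 2 (C n))
variable (hAind : ∀ m n, m ≠ n → ∀ s : K, A m ≠ s • A n)
variable (hBind : ∀ m n, m ≠ n → ∀ s : K, B m ≠ s • B n)
variable (hCind : ∀ m n, m ≠ n → ∀ s : K, C m ≠ s • C n)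

include hFA hFB hFC hAind hBind hCind

lemma genProd_notMem_AB {i j a b c : ℕ} (hi : ¬ i < a) (hj : ¬ j < b) :
    genProd A B C a b c ∉ Ideal.span {A i, B j} := by
  haveI hP : (Ideal.span {A i, B j}).IsPrime :=
    span_pair_isPrime (by decide) (hFA i) (hFB j)
  intro hmem
  unfold genProd at hmem
  rcases hP.mem_or_mem hmem with hm | hm
  · rcases hP.mem_or_mem hm with hm' | hm'
    · obtain ⟨i', hi', hmi⟩ := Ideal.IsPrime.prod_mem_iff.mp hm'
      have : i' ≠ i := fun h => hi (h ▸ Finset.mem_range.mp hi')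
      exact form_notMem_span_pair (by decide) (hFA i) (hFB j) (hFA i')
        (fun _ => hAind i' i this) (fun h => absurd h (by decide)) hmi
    · obtain ⟨j', hj', hmj⟩ := Ideal.IsPrime.prod_mem_iff.mp hm'
      have : j' ≠ j := fun h => hj (h ▸ Finset.mem_range.mp hj')
      exact form_notMem_span_pair (by decide) (hFA i) (hFB j) (hFB j')
        (fun h => absurd h (by decide)) (fun _ => hBind j' j this) hmj
  · obtain ⟨k', hk', hmk⟩ := Ideal.IsPrime.prod_mem_iff.mp hm
    exact form_notMem_span_pair (by decide) (hFA i) (hFB j) (hFC k')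
      (fun h => absurd h (by decide)) (fun h => absurd h (by decide)) hmk

lemma genProd_notMem_AC {i k a b c : ℕ} (hi : ¬ i < a) (hk : ¬ k < c) :
    genProd A B C a b c ∉ Ideal.span {A i, C k} := by
  haveI hP : (Ideal.span {A i, C k}).IsPrime :=
    span_pair_isPrime (show (0:Fin 3) ≠ 2 by decide) (hFA i) (hFC k)
  intro hmem
  unfold genProd at hmem
  rcases hP.mem_or_mem hmem with hm | hm
  · rcases hP.mem_or_mem hm with hm' | hm'
    · obtain ⟨i', hi', hmi⟩ := Ideal.IsPrime.prod_mem_iff.mp hm'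
      have : i' ≠ i := fun h => hi (h ▸ Finset.mem_range.mp hi')
      exact form_notMem_span_pair (by decide) (hFA i) (hFC k) (hFA i')
        (fun _ => hAind i' i this) (fun h => absurd h (by decide)) hmi
    · obtain ⟨j', hj', hmj⟩ := Ideal.IsPrime.prod_mem_iff.mp hm'
      exact form_notMem_span_pair (by decide) (hFA i) (hFC k) (hFB j')
        (fun h => absurd h (by decide)) (fun h => absurd h (by decide)) hmj
  · obtain ⟨k', hk', hmk⟩ := Ideal.IsPrime.prod_mem_iff.mp hm
    have : k' ≠ k := fun h => hk (h ▸ Finset.mem_range.mp hk')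
    exact form_notMem_span_pair (by decide) (hFA i) (hFC k) (hFC k')
      (fun h => absurd h (by decide)) (fun _ => hCind k' k this) hmk

lemma genProd_notMem_BC {j k a b c : ℕ} (hj : ¬ j < b) (hk : ¬ k < c) :
    genProd A B C a b c ∉ Ideal.span {B j, C k} := by
  haveI hP : (Ideal.span {B j, C k}).IsPrime :=
    span_pair_isPrime (show (1:Fin 3) ≠ 2 by decide) (hFB j) (hFC k)
  intro hmem
  unfold genProd at hmem
  rcases hP.mem_or_mem hmem with hm | hm
  · rcases hP.mem_or_mem hm with hm' | hm'
    · obtain ⟨i', hi', hmi⟩ := Ideal.IsPrime.prod_mem_iff.mp hm'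
      exact form_notMem_span_pair (by decide) (hFB j) (hFC k) (hFA i')
        (fun h => absurd h (by decide)) (fun h => absurd h (by decide)) hmi
    · obtain ⟨j', hj', hmj⟩ := Ideal.IsPrime.prod_mem_iff.mp hm'
      have : j' ≠ j := fun h => hj (h ▸ Finset.mem_range.mp hj')
      exact form_notMem_span_pair (by decide) (hFB j) (hFC k) (hFB j')
        (fun _ => hBind j' j this) (fun h => absurd h (by decide)) hmj
  · obtain ⟨k', hk', hmk⟩ := Ideal.IsPrime.prod_mem_iff.mp hm
    have : k' ≠ k := fun h => hk (h ▸ Finset.mem_range.mp hk')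
    exact form_notMem_span_pair (by decide) (hFB j) (hFC k) (hFC k')
      (fun h => absurd h (by decide)) (fun _ => hCind k' k this) hmk

end NotMem


/-- The covering condition for a degree triple. -/
def Cov (U₃ U₂ U₁ : Finset (ℕ × ℕ)) (w : ℕ × ℕ × ℕ) : Prop :=
  (∀ p ∈ U₃, p.1 < w.1 ∨ p.2 < w.2.1) ∧ (∀ p ∈ U₂, p.1 < w.1 ∨ p.2 < w.2.2) ∧
    (∀ p ∈ U₁, p.1 < w.2.1 ∨ p.2 < w.2.2)

section Char

variable {A B C : ℕ → MvPolynomial (Fin 3 × Fin 2) K}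

lemma mem_idealPart {F G : ℕ → MvPolynomial (Fin 3 × Fin 2) K} {U : Finset (ℕ × ℕ)}
    {x : MvPolynomial (Fin 3 × Fin 2) K} :
    x ∈ idealPart F G U ↔ ∀ p ∈ U, x ∈ Ideal.span {F p.1, G p.2} := by
  simp [idealPart, Submodule.mem_iInf]

lemma cov_genProd_mem_lineIdeal {U₃ U₂ U₁ : Finset (ℕ × ℕ)} {w : ℕ × ℕ × ℕ}
    (h : Cov U₃ U₂ U₁ w) :
    genProd A B C w.1 w.2.1 w.2.2 ∈ lineIdeal A B C U₃ U₂ U₁ := by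
  refine ⟨⟨?_, ?_⟩, ?_⟩
  · exact mem_idealPart.mpr fun p hp => genProd_mem_AB (h.1 p hp)
  · exact mem_idealPart.mpr fun p hp => genProd_mem_AC (h.2.1 p hp)
  · exact mem_idealPart.mpr fun p hp => genProd_mem_BC (h.2.2 p hp)

variable (hFA : ∀ n, IsForm 0 (A n)) (hFB : ∀ n, IsForm 1 (B n)) (hFC : ∀ n, IsForm 2 (C n))
variable (hAind : ∀ m n, m ≠ n → ∀ s : K, A m ≠ s • A n)
variable (hBind : ∀ m n, m ≠ n → ∀ s : K, B m ≠ s • B n)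
variable (hCind : ∀ m n, m ≠ n → ∀ s : K, C m ≠ s • C n)

include hFA hFB hFC hAind hBind hCind

set_option linter.unusedSectionVars false

lemma charAB {U : Finset (ℕ × ℕ)} {a b c : ℕ} :
    genProd A B C a b c ∈ idealPart A B U ↔ ∀ p ∈ U, p.1 < a ∨ p.2 < b := by
  rw [mem_idealPart]
  constructor
  · intro h p hp
    by_contra hc
    push_neg at hc
    exact genProd_notMem_AB hFA hFB hFC hAind hBind hCind
      (by omega) (by omega) (h p hp)
  · intro h p hp
    exact genProd_mem_AB (h p hp)

lemma charAC {U : Finset (ℕ × ℕ)} {a b c : ℕ} :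
    genProd A B C a b c ∈ idealPart A C U ↔ ∀ p ∈ U, p.1 < a ∨ p.2 < c := by
  rw [mem_idealPart]
  constructor
  · intro h p hp
    by_contra hc
    push_neg at hc
    exact genProd_notMem_AC hFA hFB hFC hAind hBind hCind
      (by omega) (by omega) (h p hp)
  · intro h p hp
    exact genProd_mem_AC (h p hp)

lemma charBC {U : Finset (ℕ × ℕ)} {a b c : ℕ} :
    genProd A B C a b c ∈ idealPart B C U ↔ ∀ p ∈ U, p.1 < b ∨ p.2 < c := by
  rw [mem_idealPart]
  constructor
  · intro h p hp
    by_contra hc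
    push_neg at hc
    exact genProd_notMem_BC hFA hFB hFC hAind hBind hCind
      (by omega) (by omega) (h p hp)
  · intro h p hp
    exact genProd_mem_BC (h p hp)

end Char


section Main

variable {A B C : ℕ → MvPolynomial (Fin 3 × Fin 2) K}
variable (hFA : ∀ n, IsForm 0 (A n)) (hFB : ∀ n, IsForm 1 (B n)) (hFC : ∀ n, IsForm 2 (C n))
variable (hAind : ∀ m n, m ≠ n → ∀ s : K, A m ≠ s • A n)
variable (hBind : ∀ m n, m ≠ n → ∀ s : K, B m ≠ s • B n)
variable (hCind : ∀ m n, m ≠ n → ∀ s : K, C m ≠ s • C n)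

set_option linter.unusedSectionVars false

set_option maxHeartbeats 1000000 in
include hFA hFB hFC hAind hBind hCind in
theorem main_incl : ∀ n : ℕ, ∀ U₃ U₂ U₁ : Finset (ℕ × ℕ),
    U₃.card + U₂.card + U₁.card ≤ n →
    (∀ p ∈ U₃, ∀ q : ℕ × ℕ, q ≤ p → q ∈ U₃) →
    (∀ p ∈ U₂, ∀ q : ℕ × ℕ, q ≤ p → q ∈ U₂) →
    (∀ p ∈ U₁, ∀ q : ℕ × ℕ, q ≤ p → q ∈ U₁) →
    lineIdeal A B C U₃ U₂ U₁ ≤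
      Ideal.span ((fun w : ℕ × ℕ × ℕ => genProd A B C w.1 w.2.1 w.2.2) ''
        {w | Cov U₃ U₂ U₁ w}) := by
  classical
  intro n
  induction n with
  | zero =>
      intro U₃ U₂ U₁ hcard _ _ _
      have h3 : U₃ = ∅ := Finset.card_eq_zero.mp (by omega)
      have h2 : U₂ = ∅ := Finset.card_eq_zero.mp (by omega)
      have h1 : U₁ = ∅ := Finset.card_eq_zero.mp (by omega)
      subst h3; subst h2; subst h1
      intro F _
      have hcov : Cov (∅ : Finset (ℕ×ℕ)) ∅ ∅ (0, 0, 0) := by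
        refine ⟨?_, ?_, ?_⟩ <;> intro p hp <;> simp at hp
      have h1 : (1 : MvPolynomial (Fin 3 × Fin 2) K) ∈
          Ideal.span ((fun w : ℕ × ℕ × ℕ => genProd A B C w.1 w.2.1 w.2.2) ''
            {w | Cov (∅ : Finset (ℕ×ℕ)) ∅ ∅ w}) := by
        apply Ideal.subset_span
        exact ⟨(0,0,0), hcov, by simp [genProd]⟩
      exact (Ideal.eq_top_iff_one _).mpr h1 ▸ trivial
  | succ n IH =>
      intro U₃ U₂ U₁ hcard hU₃ hU₂ hU₁
      by_cases hne3 : U₃.Nonempty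
      · -- shrink U₃
        obtain ⟨cell, hcellmem', hcellmax'⟩ := Set.Finite.exists_maximalFor id
          (↑U₃ : Set (ℕ × ℕ)) U₃.finite_toSet (by exact_mod_cast hne3)
        obtain ⟨i₀, j₀⟩ := cell
        have hcellmem : (i₀, j₀) ∈ U₃ := by exact_mod_cast hcellmem'
        have hcellmax : ∀ p ∈ U₃, (i₀, j₀) ≤ p → (i₀, j₀) = p := by
          intro p hp hle
          exact le_antisymm hle (hcellmax' (by exact_mod_cast hp) hle)
        set U₃' := U₃.erase (i₀, j₀) with hU₃'def
        have hDC' : ∀ p ∈ U₃', ∀ q : ℕ × ℕ, q ≤ p → q ∈ U₃' := by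
          intro p hp q hq
          have hpU : p ∈ U₃ := Finset.mem_of_mem_erase hp
          refine Finset.mem_erase.mpr ⟨?_, hU₃ p hpU q hq⟩
          rintro rfl
          exact (Finset.mem_erase.mp hp).1 (hcellmax p hpU hq).symm
        have hcard' : U₃'.card + U₂.card + U₁.card ≤ n := by
          rw [hU₃'def, Finset.card_erase_of_mem hcellmem]
          have h1 : 1 ≤ U₃.card := Finset.card_pos.mpr hne3
          omega
        have IH' := IH U₃' U₂ U₁ hcard' hDC' hU₂ hU₁
        intro F hF
        have hF3 : F ∈ idealPart A B U₃ := hF.1.1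
        have hFsub : F ∈ lineIdeal A B C U₃' U₂ U₁ := by
          refine ⟨⟨?_, hF.1.2⟩, hF.2⟩
          exact mem_idealPart.mpr fun p hp =>
            mem_idealPart.mp hF3 p (Finset.mem_of_mem_erase hp)
        have hF' := IH' hFsub
        set Bd : Set (ℕ × ℕ × ℕ) :=
          {w | Cov U₃' U₂ U₁ w ∧ w.1 ≤ i₀ ∧ w.2.1 ≤ j₀} with hBd
        have hsplit : {w | Cov U₃' U₂ U₁ w} ⊆ {w | Cov U₃ U₂ U₁ w} ∪ Bd := by
          intro w hw
          by_cases hcase : i₀ < w.1 ∨ j₀ < w.2.1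
          · left
            refine ⟨?_, hw.2.1, hw.2.2⟩
            intro p hp
            by_cases hpc : p = (i₀, j₀)
            · subst hpc; exact hcase
            · exact hw.1 p (Finset.mem_erase.mpr ⟨hpc, hp⟩)
          · right
            exact ⟨hw, by omega, by omega⟩
        have hmem2 : F ∈
            Ideal.span ((fun w : ℕ × ℕ × ℕ => genProd A B C w.1 w.2.1 w.2.2) ''
              {w | Cov U₃ U₂ U₁ w}) ⊔
            Ideal.span ((fun w : ℕ × ℕ × ℕ => genProd A B C w.1 w.2.1 w.2.2) '' Bd) := by
          rw [← Ideal.span_union, ← Set.image_union]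
          exact Ideal.span_mono (Set.image_mono (f := _) hsplit) hF'
        obtain ⟨G, hG, E, hE, hGE⟩ := Submodule.mem_sup.mp hmem2
        have hbadeq : ∀ w ∈ Bd, w.1 = i₀ ∧ w.2.1 = j₀ := by
          intro w hw
          obtain ⟨hcov, ha, hb⟩ := hw
          constructor
          · by_contra hne
            have halt : w.1 < i₀ := by omega
            have hmem : ((w.1, j₀) : ℕ × ℕ) ∈ U₃' := by
              refine Finset.mem_erase.mpr ⟨?_, ?_⟩
              · simp only [ne_eq, Prod.mk.injEq, not_and]
                intro h'; omega
              · exact hU₃ _ hcellmem _ (Prod.mk_le_mk.mpr ⟨le_of_lt halt, le_rfl⟩)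
            have hor : w.1 < w.1 ∨ j₀ < w.2.1 := hcov.1 _ hmem
            omega
          · by_contra hne
            have halt : w.2.1 < j₀ := by omega
            have hmem : ((i₀, w.2.1) : ℕ × ℕ) ∈ U₃' := by
              refine Finset.mem_erase.mpr ⟨?_, ?_⟩
              · simp only [ne_eq, Prod.mk.injEq, not_and]
                intro h'; omega
              · exact hU₃ _ hcellmem _ (Prod.mk_le_mk.mpr ⟨le_rfl, le_of_lt halt⟩)
            have hor : i₀ < w.1 ∨ w.2.1 < w.2.1 := hcov.1 _ hmem
            omega
        by_cases hQ : ∃ c, Cov U₃' U₂ U₁ (i₀, j₀, c)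
        · -- nonempty bad part
          set c₀ := Nat.find hQ with hc₀
          obtain ⟨q1', q2', q3'⟩ := Nat.find_spec hQ
          have q1 : ∀ p ∈ U₃', p.1 < i₀ ∨ p.2 < j₀ := q1'
          have q2 : ∀ p ∈ U₂, p.1 < i₀ ∨ p.2 < c₀ := q2'
          have q3 : ∀ p ∈ U₁, p.1 < j₀ ∨ p.2 < c₀ := q3'
          have hBsub : Ideal.span ((fun w : ℕ × ℕ × ℕ => genProd A B C w.1 w.2.1 w.2.2) '' Bd) ≤
              Ideal.span {genProd A B C i₀ j₀ c₀} := by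
            rw [Ideal.span_le]
            rintro x ⟨w, hw, rfl⟩
            obtain ⟨h1, h2⟩ := hbadeq w hw
            have hweq : w = (i₀, j₀, w.2.2) := by
              rw [← h1, ← h2]
            have hQw : Cov U₃' U₂ U₁ (i₀, j₀, w.2.2) := hweq ▸ hw.1
            have hc : c₀ ≤ w.2.2 := Nat.find_min' hQ hQw
            have hdvd : genProd A B C i₀ j₀ c₀ ∣ genProd A B C w.1 w.2.1 w.2.2 := by
              rw [h1, h2]
              exact genProd_dvd le_rfl le_rfl hc
            exact SetLike.mem_coe.mpr (Ideal.mem_span_singleton.mpr hdvd)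
          obtain ⟨h, hh⟩ := Ideal.mem_span_singleton'.mp (hBsub hE)
          set P₀ := Ideal.span {A i₀, B j₀} with hP₀def
          haveI hP₀ : P₀.IsPrime := span_pair_isPrime (by decide) (hFA i₀) (hFB j₀)
          have hFP : F ∈ P₀ := mem_idealPart.mp hF3 (i₀, j₀) hcellmem
          have hGle : Ideal.span ((fun w : ℕ × ℕ × ℕ => genProd A B C w.1 w.2.1 w.2.2) ''
              {w | Cov U₃ U₂ U₁ w}) ≤ P₀ := by
            rw [Ideal.span_le]
            rintro x ⟨w, hw, rfl⟩
            exact SetLike.mem_coe.mpr (genProd_mem_AB (hw.1 (i₀, j₀) hcellmem))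
          have hGP : G ∈ P₀ := hGle hG
          have hEP : E ∈ P₀ := by
            have hEeq : E = F - G := by rw [← hGE]; ring
            rw [hEeq]; exact P₀.sub_mem hFP hGP
          have hg₀P : genProd A B C i₀ j₀ c₀ ∉ P₀ :=
            genProd_notMem_AB hFA hFB hFC hAind hBind hCind (lt_irrefl i₀) (lt_irrefl j₀)
          have hhP : h ∈ P₀ := by
            rcases hP₀.mem_or_mem (hh ▸ hEP) with h' | h'
            · exact h'
            · exact absurd h' hg₀P
          obtain ⟨u, v, huv⟩ := Ideal.mem_span_pair.mp hhP
          have hkey1 : A i₀ * genProd A B C i₀ j₀ c₀ = genProd A B C (i₀+1) j₀ c₀ := by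
            unfold genProd
            rw [Finset.prod_range_succ]
            ring
          have hkey2 : B j₀ * genProd A B C i₀ j₀ c₀ = genProd A B C i₀ (j₀+1) c₀ := by
            unfold genProd
            rw [Finset.prod_range_succ]
            ring
          have hcov1 : Cov U₃ U₂ U₁ (i₀+1, j₀, c₀) := by
            refine ⟨?_, ?_, ?_⟩
            case refine_2 =>
              intro p hp
              show p.1 < i₀ + 1 ∨ p.2 < c₀
              have := q2 p hp; omega
            case refine_3 =>
              intro p hp
              show p.1 < j₀ ∨ p.2 < c₀
              exact q3 p hp
            intro p hp
            show p.1 < i₀ + 1 ∨ p.2 < j₀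
            by_cases hpc : p = (i₀, j₀)
            · subst hpc; left; exact Nat.lt_succ_self _
            · by_contra hcon
              push_neg at hcon
              have hle : (i₀, j₀) ≤ p := Prod.le_def.mpr ⟨by omega, by omega⟩
              exact hpc (hcellmax p hp hle).symm
          have hcov2 : Cov U₃ U₂ U₁ (i₀, j₀+1, c₀) := by
            refine ⟨?_, ?_, ?_⟩
            case refine_2 =>
              intro p hp
              show p.1 < i₀ ∨ p.2 < c₀
              exact q2 p hp
            case refine_3 =>
              intro p hp
              show p.1 < j₀ + 1 ∨ p.2 < c₀
              have := q3 p hp; omega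
            intro p hp
            show p.1 < i₀ ∨ p.2 < j₀ + 1
            by_cases hpc : p = (i₀, j₀)
            · subst hpc; right; exact Nat.lt_succ_self _
            · by_contra hcon
              push_neg at hcon
              have hle : (i₀, j₀) ≤ p := Prod.le_def.mpr ⟨by omega, by omega⟩
              exact hpc (hcellmax p hp hle).symm
          have hmm1 : genProd A B C (i₀+1) j₀ c₀ ∈
              Ideal.span ((fun w : ℕ × ℕ × ℕ => genProd A B C w.1 w.2.1 w.2.2) ''
                {w | Cov U₃ U₂ U₁ w}) :=
            Ideal.subset_span ⟨(i₀+1, j₀, c₀), hcov1, rfl⟩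
          have hmm2 : genProd A B C i₀ (j₀+1) c₀ ∈
              Ideal.span ((fun w : ℕ × ℕ × ℕ => genProd A B C w.1 w.2.1 w.2.2) ''
                {w | Cov U₃ U₂ U₁ w}) :=
            Ideal.subset_span ⟨(i₀, j₀+1, c₀), hcov2, rfl⟩
          have hFeq : F = G + (u * (A i₀ * genProd A B C i₀ j₀ c₀) +
              v * (B j₀ * genProd A B C i₀ j₀ c₀)) := by
            rw [← hGE, ← hh, ← huv]; ring
          rw [hFeq]
          refine add_mem hG (add_mem ?_ ?_)
          · rw [hkey1]; exact Ideal.mul_mem_left _ u hmm1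
          · rw [hkey2]; exact Ideal.mul_mem_left _ v hmm2
        · -- bad part empty
          have hBadempty : Bd = ∅ := by
            ext w
            simp only [Set.mem_empty_iff_false, iff_false]
            intro hw
            obtain ⟨h1, h2⟩ := hbadeq w hw
            have hweq : ((i₀, j₀, w.2.2) : ℕ × ℕ × ℕ) = w := by
              rw [← h1, ← h2]
            exact hQ ⟨w.2.2, hweq ▸ hw.1⟩
          rw [hBadempty] at hE
          simp only [Set.image_empty, Ideal.span_empty, Ideal.mem_bot] at hE
          subst hE
          rw [← hGE, add_zero]
          exact hG
      · by_cases hne2 : U₂.Nonempty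
        · -- shrink U₂
          obtain ⟨cell, hcellmem', hcellmax'⟩ := Set.Finite.exists_maximalFor id
            (↑U₂ : Set (ℕ × ℕ)) U₂.finite_toSet (by exact_mod_cast hne2)
          obtain ⟨i₀, k₀⟩ := cell
          have hcellmem : (i₀, k₀) ∈ U₂ := by exact_mod_cast hcellmem'
          have hcellmax : ∀ p ∈ U₂, (i₀, k₀) ≤ p → (i₀, k₀) = p := by
            intro p hp hle
            exact le_antisymm hle (hcellmax' (by exact_mod_cast hp) hle)
          set U₂' := U₂.erase (i₀, k₀) with hU₂'def
          have hDC' : ∀ p ∈ U₂', ∀ q : ℕ × ℕ, q ≤ p → q ∈ U₂' := by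
            intro p hp q hq
            have hpU : p ∈ U₂ := Finset.mem_of_mem_erase hp
            refine Finset.mem_erase.mpr ⟨?_, hU₂ p hpU q hq⟩
            rintro rfl
            exact (Finset.mem_erase.mp hp).1 (hcellmax p hpU hq).symm
          have hcard' : U₃.card + U₂'.card + U₁.card ≤ n := by
            rw [hU₂'def, Finset.card_erase_of_mem hcellmem]
            have h1 : 1 ≤ U₂.card := Finset.card_pos.mpr hne2
            omega
          have IH' := IH U₃ U₂' U₁ hcard' hU₃ hDC' hU₁
          intro F hF
          have hF2 : F ∈ idealPart A C U₂ := hF.1.2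
          have hFsub : F ∈ lineIdeal A B C U₃ U₂' U₁ := by
            refine ⟨⟨hF.1.1, ?_⟩, hF.2⟩
            exact mem_idealPart.mpr fun p hp =>
              mem_idealPart.mp hF2 p (Finset.mem_of_mem_erase hp)
          have hF' := IH' hFsub
          set Bd : Set (ℕ × ℕ × ℕ) :=
            {w | Cov U₃ U₂' U₁ w ∧ w.1 ≤ i₀ ∧ w.2.2 ≤ k₀} with hBd
          have hsplit : {w | Cov U₃ U₂' U₁ w} ⊆ {w | Cov U₃ U₂ U₁ w} ∪ Bd := by
            intro w hw
            by_cases hcase : i₀ < w.1 ∨ k₀ < w.2.2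
            · left
              refine ⟨hw.1, ?_, hw.2.2⟩
              intro p hp
              by_cases hpc : p = (i₀, k₀)
              · subst hpc; exact hcase
              · exact hw.2.1 p (Finset.mem_erase.mpr ⟨hpc, hp⟩)
            · right
              exact ⟨hw, by omega, by omega⟩
          have hmem2 : F ∈
              Ideal.span ((fun w : ℕ × ℕ × ℕ => genProd A B C w.1 w.2.1 w.2.2) ''
                {w | Cov U₃ U₂ U₁ w}) ⊔
              Ideal.span ((fun w : ℕ × ℕ × ℕ => genProd A B C w.1 w.2.1 w.2.2) '' Bd) := by
            rw [← Ideal.span_union, ← Set.image_union]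
            exact Ideal.span_mono (Set.image_mono (f := _) hsplit) hF'
          obtain ⟨G, hG, E, hE, hGE⟩ := Submodule.mem_sup.mp hmem2
          have hbadeq : ∀ w ∈ Bd, w.1 = i₀ ∧ w.2.2 = k₀ := by
            intro w hw
            obtain ⟨hcov, ha, hb⟩ := hw
            constructor
            · by_contra hne
              have halt : w.1 < i₀ := by omega
              have hmem : ((w.1, k₀) : ℕ × ℕ) ∈ U₂' := by
                refine Finset.mem_erase.mpr ⟨?_, ?_⟩
                · simp only [ne_eq, Prod.mk.injEq, not_and]
                  intro h'; omega
                · exact hU₂ _ hcellmem _ (Prod.mk_le_mk.mpr ⟨le_of_lt halt, le_rfl⟩)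
              have hor : w.1 < w.1 ∨ k₀ < w.2.2 := hcov.2.1 _ hmem
              omega
            · by_contra hne
              have halt : w.2.2 < k₀ := by omega
              have hmem : ((i₀, w.2.2) : ℕ × ℕ) ∈ U₂' := by
                refine Finset.mem_erase.mpr ⟨?_, ?_⟩
                · simp only [ne_eq, Prod.mk.injEq, not_and]
                  intro h'; omega
                · exact hU₂ _ hcellmem _ (Prod.mk_le_mk.mpr ⟨le_rfl, le_of_lt halt⟩)
              have hor : i₀ < w.1 ∨ w.2.2 < w.2.2 := hcov.2.1 _ hmem
              omega
          by_cases hQ : ∃ b, Cov U₃ U₂' U₁ (i₀, b, k₀)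
          · set b₀ := Nat.find hQ with hb₀
            obtain ⟨q1', q2', q3'⟩ := Nat.find_spec hQ
            have q1 : ∀ p ∈ U₃, p.1 < i₀ ∨ p.2 < b₀ := q1'
            have q2 : ∀ p ∈ U₂', p.1 < i₀ ∨ p.2 < k₀ := q2'
            have q3 : ∀ p ∈ U₁, p.1 < b₀ ∨ p.2 < k₀ := q3'
            have hBsub : Ideal.span ((fun w : ℕ × ℕ × ℕ => genProd A B C w.1 w.2.1 w.2.2) '' Bd) ≤
                Ideal.span {genProd A B C i₀ b₀ k₀} := by
              rw [Ideal.span_le]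
              rintro x ⟨w, hw, rfl⟩
              obtain ⟨h1, h2⟩ := hbadeq w hw
              have hweq : w = (i₀, w.2.1, k₀) := by
                rw [← h1, ← h2]
              have hQw : Cov U₃ U₂' U₁ (i₀, w.2.1, k₀) := hweq ▸ hw.1
              have hc : b₀ ≤ w.2.1 := Nat.find_min' hQ hQw
              have hdvd : genProd A B C i₀ b₀ k₀ ∣ genProd A B C w.1 w.2.1 w.2.2 := by
                rw [h1, h2]
                exact genProd_dvd le_rfl hc le_rfl
              exact SetLike.mem_coe.mpr (Ideal.mem_span_singleton.mpr hdvd)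
            obtain ⟨h, hh⟩ := Ideal.mem_span_singleton'.mp (hBsub hE)
            set P₀ := Ideal.span {A i₀, C k₀} with hP₀def
            haveI hP₀ : P₀.IsPrime :=
              span_pair_isPrime (show (0 : Fin 3) ≠ 2 by decide) (hFA i₀) (hFC k₀)
            have hFP : F ∈ P₀ := mem_idealPart.mp hF2 (i₀, k₀) hcellmem
            have hGle : Ideal.span ((fun w : ℕ × ℕ × ℕ => genProd A B C w.1 w.2.1 w.2.2) ''
                {w | Cov U₃ U₂ U₁ w}) ≤ P₀ := by
              rw [Ideal.span_le]
              rintro x ⟨w, hw, rfl⟩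
              exact SetLike.mem_coe.mpr (genProd_mem_AC (hw.2.1 (i₀, k₀) hcellmem))
            have hGP : G ∈ P₀ := hGle hG
            have hEP : E ∈ P₀ := by
              have hEeq : E = F - G := by rw [← hGE]; ring
              rw [hEeq]; exact P₀.sub_mem hFP hGP
            have hg₀P : genProd A B C i₀ b₀ k₀ ∉ P₀ :=
              genProd_notMem_AC hFA hFB hFC hAind hBind hCind (lt_irrefl i₀) (lt_irrefl k₀)
            have hhP : h ∈ P₀ := by
              rcases hP₀.mem_or_mem (hh ▸ hEP) with h' | h'
              · exact h'
              · exact absurd h' hg₀P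
            obtain ⟨u, v, huv⟩ := Ideal.mem_span_pair.mp hhP
            have hkey1 : A i₀ * genProd A B C i₀ b₀ k₀ = genProd A B C (i₀+1) b₀ k₀ := by
              unfold genProd
              rw [Finset.prod_range_succ]
              ring
            have hkey2 : C k₀ * genProd A B C i₀ b₀ k₀ = genProd A B C i₀ b₀ (k₀+1) := by
              unfold genProd
              rw [Finset.prod_range_succ (f := fun k => C k)]
              ring
            have hcov1 : Cov U₃ U₂ U₁ (i₀+1, b₀, k₀) := by
              refine ⟨?_, ?_, ?_⟩
              case refine_1 =>
                intro p hp
                show p.1 < i₀ + 1 ∨ p.2 < b₀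
                have := q1 p hp; omega
              case refine_3 =>
                intro p hp
                show p.1 < b₀ ∨ p.2 < k₀
                exact q3 p hp
              intro p hp
              show p.1 < i₀ + 1 ∨ p.2 < k₀
              by_cases hpc : p = (i₀, k₀)
              · subst hpc; left; exact Nat.lt_succ_self _
              · by_contra hcon
                push_neg at hcon
                have hle : (i₀, k₀) ≤ p := Prod.le_def.mpr ⟨by omega, by omega⟩
                exact hpc (hcellmax p hp hle).symm
            have hcov2 : Cov U₃ U₂ U₁ (i₀, b₀, k₀+1) := by
              refine ⟨?_, ?_, ?_⟩
              case refine_1 =>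
                intro p hp
                show p.1 < i₀ ∨ p.2 < b₀
                exact q1 p hp
              case refine_3 =>
                intro p hp
                show p.1 < b₀ ∨ p.2 < k₀ + 1
                have := q3 p hp; omega
              intro p hp
              show p.1 < i₀ ∨ p.2 < k₀ + 1
              by_cases hpc : p = (i₀, k₀)
              · subst hpc; right; exact Nat.lt_succ_self _
              · by_contra hcon
                push_neg at hcon
                have hle : (i₀, k₀) ≤ p := Prod.le_def.mpr ⟨by omega, by omega⟩
                exact hpc (hcellmax p hp hle).symm
            have hmm1 : genProd A B C (i₀+1) b₀ k₀ ∈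
                Ideal.span ((fun w : ℕ × ℕ × ℕ => genProd A B C w.1 w.2.1 w.2.2) ''
                  {w | Cov U₃ U₂ U₁ w}) :=
              Ideal.subset_span ⟨(i₀+1, b₀, k₀), hcov1, rfl⟩
            have hmm2 : genProd A B C i₀ b₀ (k₀+1) ∈
                Ideal.span ((fun w : ℕ × ℕ × ℕ => genProd A B C w.1 w.2.1 w.2.2) ''
                  {w | Cov U₃ U₂ U₁ w}) :=
              Ideal.subset_span ⟨(i₀, b₀, k₀+1), hcov2, rfl⟩
            have hFeq : F = G + (u * (A i₀ * genProd A B C i₀ b₀ k₀) +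
                v * (C k₀ * genProd A B C i₀ b₀ k₀)) := by
              rw [← hGE, ← hh, ← huv]; ring
            rw [hFeq]
            refine add_mem hG (add_mem ?_ ?_)
            · rw [hkey1]; exact Ideal.mul_mem_left _ u hmm1
            · rw [hkey2]; exact Ideal.mul_mem_left _ v hmm2
          · have hBadempty : Bd = ∅ := by
              ext w
              simp only [Set.mem_empty_iff_false, iff_false]
              intro hw
              obtain ⟨h1, h2⟩ := hbadeq w hw
              have hweq : ((i₀, w.2.1, k₀) : ℕ × ℕ × ℕ) = w := by
                rw [← h1, ← h2]
              exact hQ ⟨w.2.1, hweq ▸ hw.1⟩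
            rw [hBadempty] at hE
            simp only [Set.image_empty, Ideal.span_empty, Ideal.mem_bot] at hE
            subst hE
            rw [← hGE, add_zero]
            exact hG
        · by_cases hne1 : U₁.Nonempty
          · -- shrink U₁
            obtain ⟨cell, hcellmem', hcellmax'⟩ := Set.Finite.exists_maximalFor id
              (↑U₁ : Set (ℕ × ℕ)) U₁.finite_toSet (by exact_mod_cast hne1)
            obtain ⟨j₀, k₀⟩ := cell
            have hcellmem : (j₀, k₀) ∈ U₁ := by exact_mod_cast hcellmem'
            have hcellmax : ∀ p ∈ U₁, (j₀, k₀) ≤ p → (j₀, k₀) = p := by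
              intro p hp hle
              exact le_antisymm hle (hcellmax' (by exact_mod_cast hp) hle)
            set U₁' := U₁.erase (j₀, k₀) with hU₁'def
            have hDC' : ∀ p ∈ U₁', ∀ q : ℕ × ℕ, q ≤ p → q ∈ U₁' := by
              intro p hp q hq
              have hpU : p ∈ U₁ := Finset.mem_of_mem_erase hp
              refine Finset.mem_erase.mpr ⟨?_, hU₁ p hpU q hq⟩
              rintro rfl
              exact (Finset.mem_erase.mp hp).1 (hcellmax p hpU hq).symm
            have hcard' : U₃.card + U₂.card + U₁'.card ≤ n := by
              rw [hU₁'def, Finset.card_erase_of_mem hcellmem]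
              have h1 : 1 ≤ U₁.card := Finset.card_pos.mpr hne1
              omega
            have IH' := IH U₃ U₂ U₁' hcard' hU₃ hU₂ hDC'
            intro F hF
            have hF1 : F ∈ idealPart B C U₁ := hF.2
            have hFsub : F ∈ lineIdeal A B C U₃ U₂ U₁' := by
              refine ⟨hF.1, ?_⟩
              exact mem_idealPart.mpr fun p hp =>
                mem_idealPart.mp hF1 p (Finset.mem_of_mem_erase hp)
            have hF' := IH' hFsub
            set Bd : Set (ℕ × ℕ × ℕ) :=
              {w | Cov U₃ U₂ U₁' w ∧ w.2.1 ≤ j₀ ∧ w.2.2 ≤ k₀} with hBd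
            have hsplit : {w | Cov U₃ U₂ U₁' w} ⊆ {w | Cov U₃ U₂ U₁ w} ∪ Bd := by
              intro w hw
              by_cases hcase : j₀ < w.2.1 ∨ k₀ < w.2.2
              · left
                refine ⟨hw.1, hw.2.1, ?_⟩
                intro p hp
                by_cases hpc : p = (j₀, k₀)
                · subst hpc; exact hcase
                · exact hw.2.2 p (Finset.mem_erase.mpr ⟨hpc, hp⟩)
              · right
                exact ⟨hw, by omega, by omega⟩
            have hmem2 : F ∈
                Ideal.span ((fun w : ℕ × ℕ × ℕ => genProd A B C w.1 w.2.1 w.2.2) ''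
                  {w | Cov U₃ U₂ U₁ w}) ⊔
                Ideal.span ((fun w : ℕ × ℕ × ℕ => genProd A B C w.1 w.2.1 w.2.2) '' Bd) := by
              rw [← Ideal.span_union, ← Set.image_union]
              exact Ideal.span_mono (Set.image_mono (f := _) hsplit) hF'
            obtain ⟨G, hG, E, hE, hGE⟩ := Submodule.mem_sup.mp hmem2
            have hbadeq : ∀ w ∈ Bd, w.2.1 = j₀ ∧ w.2.2 = k₀ := by
              intro w hw
              obtain ⟨hcov, ha, hb⟩ := hw
              constructor
              · by_contra hne
                have halt : w.2.1 < j₀ := by omega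
                have hmem : ((w.2.1, k₀) : ℕ × ℕ) ∈ U₁' := by
                  refine Finset.mem_erase.mpr ⟨?_, ?_⟩
                  · simp only [ne_eq, Prod.mk.injEq, not_and]
                    intro h'; omega
                  · exact hU₁ _ hcellmem _ (Prod.mk_le_mk.mpr ⟨le_of_lt halt, le_rfl⟩)
                have hor : w.2.1 < w.2.1 ∨ k₀ < w.2.2 := hcov.2.2 _ hmem
                omega
              · by_contra hne
                have halt : w.2.2 < k₀ := by omega
                have hmem : ((j₀, w.2.2) : ℕ × ℕ) ∈ U₁' := by
                  refine Finset.mem_erase.mpr ⟨?_, ?_⟩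
                  · simp only [ne_eq, Prod.mk.injEq, not_and]
                    intro h'; omega
                  · exact hU₁ _ hcellmem _ (Prod.mk_le_mk.mpr ⟨le_rfl, le_of_lt halt⟩)
                have hor : j₀ < w.2.1 ∨ w.2.2 < w.2.2 := hcov.2.2 _ hmem
                omega
            by_cases hQ : ∃ a, Cov U₃ U₂ U₁' (a, j₀, k₀)
            · set a₀ := Nat.find hQ with ha₀
              obtain ⟨q1', q2', q3'⟩ := Nat.find_spec hQ
              have q1 : ∀ p ∈ U₃, p.1 < a₀ ∨ p.2 < j₀ := q1'
              have q2 : ∀ p ∈ U₂, p.1 < a₀ ∨ p.2 < k₀ := q2'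
              have q3 : ∀ p ∈ U₁', p.1 < j₀ ∨ p.2 < k₀ := q3'
              have hBsub : Ideal.span ((fun w : ℕ × ℕ × ℕ =>
                  genProd A B C w.1 w.2.1 w.2.2) '' Bd) ≤
                  Ideal.span {genProd A B C a₀ j₀ k₀} := by
                rw [Ideal.span_le]
                rintro x ⟨w, hw, rfl⟩
                obtain ⟨h1, h2⟩ := hbadeq w hw
                have hweq : w = (w.1, j₀, k₀) := by
                  rw [← h1, ← h2]
                have hQw : Cov U₃ U₂ U₁' (w.1, j₀, k₀) := hweq ▸ hw.1
                have hc : a₀ ≤ w.1 := Nat.find_min' hQ hQw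
                have hdvd : genProd A B C a₀ j₀ k₀ ∣ genProd A B C w.1 w.2.1 w.2.2 := by
                  rw [h1, h2]
                  exact genProd_dvd hc le_rfl le_rfl
                exact SetLike.mem_coe.mpr (Ideal.mem_span_singleton.mpr hdvd)
              obtain ⟨h, hh⟩ := Ideal.mem_span_singleton'.mp (hBsub hE)
              set P₀ := Ideal.span {B j₀, C k₀} with hP₀def
              haveI hP₀ : P₀.IsPrime :=
                span_pair_isPrime (show (1 : Fin 3) ≠ 2 by decide) (hFB j₀) (hFC k₀)
              have hFP : F ∈ P₀ := mem_idealPart.mp hF1 (j₀, k₀) hcellmem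
              have hGle : Ideal.span ((fun w : ℕ × ℕ × ℕ => genProd A B C w.1 w.2.1 w.2.2) ''
                  {w | Cov U₃ U₂ U₁ w}) ≤ P₀ := by
                rw [Ideal.span_le]
                rintro x ⟨w, hw, rfl⟩
                exact SetLike.mem_coe.mpr (genProd_mem_BC (hw.2.2 (j₀, k₀) hcellmem))
              have hGP : G ∈ P₀ := hGle hG
              have hEP : E ∈ P₀ := by
                have hEeq : E = F - G := by rw [← hGE]; ring
                rw [hEeq]; exact P₀.sub_mem hFP hGP
              have hg₀P : genProd A B C a₀ j₀ k₀ ∉ P₀ :=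
                genProd_notMem_BC hFA hFB hFC hAind hBind hCind (lt_irrefl j₀) (lt_irrefl k₀)
              have hhP : h ∈ P₀ := by
                rcases hP₀.mem_or_mem (hh ▸ hEP) with h' | h'
                · exact h'
                · exact absurd h' hg₀P
              obtain ⟨u, v, huv⟩ := Ideal.mem_span_pair.mp hhP
              have hkey1 : B j₀ * genProd A B C a₀ j₀ k₀ = genProd A B C a₀ (j₀+1) k₀ := by
                unfold genProd
                rw [Finset.prod_range_succ (f := fun j => B j)]
                ring
              have hkey2 : C k₀ * genProd A B C a₀ j₀ k₀ = genProd A B C a₀ j₀ (k₀+1) := by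
                unfold genProd
                rw [Finset.prod_range_succ (f := fun k => C k)]
                ring
              have hcov1 : Cov U₃ U₂ U₁ (a₀, j₀+1, k₀) := by
                refine ⟨?_, ?_, ?_⟩
                case refine_1 =>
                  intro p hp
                  show p.1 < a₀ ∨ p.2 < j₀ + 1
                  have := q1 p hp; omega
                case refine_2 =>
                  intro p hp
                  show p.1 < a₀ ∨ p.2 < k₀
                  exact q2 p hp
                intro p hp
                show p.1 < j₀ + 1 ∨ p.2 < k₀
                by_cases hpc : p = (j₀, k₀)
                · subst hpc; left; exact Nat.lt_succ_self _
                · by_contra hcon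
                  push_neg at hcon
                  have hle : (j₀, k₀) ≤ p := Prod.le_def.mpr ⟨by omega, by omega⟩
                  exact hpc (hcellmax p hp hle).symm
              have hcov2 : Cov U₃ U₂ U₁ (a₀, j₀, k₀+1) := by
                refine ⟨?_, ?_, ?_⟩
                case refine_1 =>
                  intro p hp
                  show p.1 < a₀ ∨ p.2 < j₀
                  exact q1 p hp
                case refine_2 =>
                  intro p hp
                  show p.1 < a₀ ∨ p.2 < k₀ + 1
                  have := q2 p hp; omega
                intro p hp
                show p.1 < j₀ ∨ p.2 < k₀ + 1
                by_cases hpc : p = (j₀, k₀)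
                · subst hpc; right; exact Nat.lt_succ_self _
                · by_contra hcon
                  push_neg at hcon
                  have hle : (j₀, k₀) ≤ p := Prod.le_def.mpr ⟨by omega, by omega⟩
                  exact hpc (hcellmax p hp hle).symm
              have hmm1 : genProd A B C a₀ (j₀+1) k₀ ∈
                  Ideal.span ((fun w : ℕ × ℕ × ℕ => genProd A B C w.1 w.2.1 w.2.2) ''
                    {w | Cov U₃ U₂ U₁ w}) :=
                Ideal.subset_span ⟨(a₀, j₀+1, k₀), hcov1, rfl⟩
              have hmm2 : genProd A B C a₀ j₀ (k₀+1) ∈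
                  Ideal.span ((fun w : ℕ × ℕ × ℕ => genProd A B C w.1 w.2.1 w.2.2) ''
                    {w | Cov U₃ U₂ U₁ w}) :=
                Ideal.subset_span ⟨(a₀, j₀, k₀+1), hcov2, rfl⟩
              have hFeq : F = G + (u * (B j₀ * genProd A B C a₀ j₀ k₀) +
                  v * (C k₀ * genProd A B C a₀ j₀ k₀)) := by
                rw [← hGE, ← hh, ← huv]; ring
              rw [hFeq]
              refine add_mem hG (add_mem ?_ ?_)
              · rw [hkey1]; exact Ideal.mul_mem_left _ u hmm1
              · rw [hkey2]; exact Ideal.mul_mem_left _ v hmm2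
            · have hBadempty : Bd = ∅ := by
                ext w
                simp only [Set.mem_empty_iff_false, iff_false]
                intro hw
                obtain ⟨h1, h2⟩ := hbadeq w hw
                have hweq : ((w.1, j₀, k₀) : ℕ × ℕ × ℕ) = w := by
                  rw [← h1, ← h2]
                exact hQ ⟨w.1, hweq ▸ hw.1⟩
              rw [hBadempty] at hE
              simp only [Set.image_empty, Ideal.span_empty, Ideal.mem_bot] at hE
              subst hE
              rw [← hGE, add_zero]
              exact hG
          · -- all three empty
            have h3 : U₃ = ∅ := Finset.not_nonempty_iff_eq_empty.mp hne3
            have h2 : U₂ = ∅ := Finset.not_nonempty_iff_eq_empty.mp hne2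
            have h1 : U₁ = ∅ := Finset.not_nonempty_iff_eq_empty.mp hne1
            subst h3; subst h2; subst h1
            intro F _
            have hcov : Cov (∅ : Finset (ℕ×ℕ)) ∅ ∅ (0, 0, 0) := by
              refine ⟨?_, ?_, ?_⟩ <;> intro p hp <;> simp at hp
            have hone : (1 : MvPolynomial (Fin 3 × Fin 2) K) ∈
                Ideal.span ((fun w : ℕ × ℕ × ℕ => genProd A B C w.1 w.2.1 w.2.2) ''
                  {w | Cov (∅ : Finset (ℕ×ℕ)) ∅ ∅ w}) := by
              apply Ideal.subset_span
              exact ⟨(0,0,0), hcov, by simp [genProd]⟩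
            exact (Ideal.eq_top_iff_one _).mpr hone ▸ trivial

end Main


lemma exists_minimal_le₂ : ∀ (n : ℕ) (S : Set (ℕ × ℕ)) (d : ℕ × ℕ), d.1 + d.2 ≤ n → d ∈ S →
    ∃ m ∈ S, m ≤ d ∧ ∀ d' ∈ S, d' ≤ m → d' = m := by
  intro n
  induction n with
  | zero =>
      intro S d hn hd
      refine ⟨d, hd, le_rfl, ?_⟩
      intro d' hd' hle
      obtain ⟨h1, h2⟩ := Prod.le_def.mp hle
      have : d'.1 = d.1 ∧ d'.2 = d.2 := by omega
      exact Prod.ext this.1 this.2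
  | succ n IH =>
      intro S d hn hd
      by_cases hmin : ∀ d' ∈ S, d' ≤ d → d' = d
      · exact ⟨d, hd, le_rfl, hmin⟩
      · push_neg at hmin
        obtain ⟨d', hd', hle, hne⟩ := hmin
        obtain ⟨h1, h2⟩ := Prod.le_def.mp hle
        have hlt : d'.1 + d'.2 ≤ n := by
          have : ¬(d'.1 = d.1 ∧ d'.2 = d.2) := fun h => hne (Prod.ext h.1 h.2)
          omega
        obtain ⟨m, hm, hle', hmin'⟩ := IH S d' hlt hd'
        exact ⟨m, hm, le_trans hle' hle, hmin'⟩

lemma exists_minimal_le₃ : ∀ (n : ℕ) (S : Set (ℕ × ℕ × ℕ)) (d : ℕ × ℕ × ℕ),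
    d.1 + d.2.1 + d.2.2 ≤ n → d ∈ S →
    ∃ m ∈ S, m ≤ d ∧ ∀ d' ∈ S, d' ≤ m → d' = m := by
  intro n
  induction n with
  | zero =>
      intro S d hn hd
      refine ⟨d, hd, le_rfl, ?_⟩
      intro d' hd' hle
      obtain ⟨h1, h23⟩ := Prod.le_def.mp hle
      obtain ⟨h2, h3⟩ := Prod.le_def.mp h23
      have he : d'.1 = d.1 ∧ d'.2.1 = d.2.1 ∧ d'.2.2 = d.2.2 := by omega
      exact Prod.ext he.1 (Prod.ext he.2.1 he.2.2)
  | succ n IH =>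
      intro S d hn hd
      by_cases hmin : ∀ d' ∈ S, d' ≤ d → d' = d
      · exact ⟨d, hd, le_rfl, hmin⟩
      · push_neg at hmin
        obtain ⟨d', hd', hle, hne⟩ := hmin
        obtain ⟨h1, h23⟩ := Prod.le_def.mp hle
        obtain ⟨h2, h3⟩ := Prod.le_def.mp h23
        have hlt : d'.1 + d'.2.1 + d'.2.2 ≤ n := by
          have : ¬(d'.1 = d.1 ∧ d'.2.1 = d.2.1 ∧ d'.2.2 = d.2.2) := fun h =>
            hne (Prod.ext h.1 (Prod.ext h.2.1 h.2.2))
          omega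
        obtain ⟨m, hm, hle', hmin'⟩ := IH S d' hlt hd'
        exact ⟨m, hm, le_trans hle' hle, hmin'⟩

section SpanEq

variable {A B C : ℕ → MvPolynomial (Fin 3 × Fin 2) K}
variable (hFA : ∀ n, IsForm 0 (A n)) (hFB : ∀ n, IsForm 1 (B n)) (hFC : ∀ n, IsForm 2 (C n))
variable (hAind : ∀ m n, m ≠ n → ∀ s : K, A m ≠ s • A n)
variable (hBind : ∀ m n, m ≠ n → ∀ s : K, B m ≠ s • B n)
variable (hCind : ∀ m n, m ≠ n → ∀ s : K, C m ≠ s • C n)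

set_option linter.unusedSectionVars false

include hFA hFB hFC hAind hBind hCind

lemma dset_subset_cov {U₃ U₂ U₁ : Finset (ℕ × ℕ)} :
    Dset A B C U₃ U₂ U₁ ⊆ {w | Cov U₃ U₂ U₁ w} := by
  rintro t ⟨p₃, hp₃, p₂, hp₂, p₁, hp₁, rfl⟩
  have h3 : ∀ p ∈ U₃, p.1 < p₃.1 ∨ p.2 < p₃.2 :=
    (charAB hFA hFB hFC hAind hBind hCind).mp hp₃.1
  have h2 : ∀ p ∈ U₂, p.1 < p₂.1 ∨ p.2 < p₂.2 :=
    (charAC hFA hFB hFC hAind hBind hCind).mp hp₂.1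
  have h1 : ∀ p ∈ U₁, p.1 < p₁.1 ∨ p.2 < p₁.2 :=
    (charBC hFA hFB hFC hAind hBind hCind).mp hp₁.1
  refine ⟨?_, ?_, ?_⟩
  · intro p hp
    show p.1 < max p₃.1 p₂.1 ∨ p.2 < max p₃.2 p₁.1
    have := h3 p hp
    omega
  · intro p hp
    show p.1 < max p₃.1 p₂.1 ∨ p.2 < max p₂.2 p₁.2
    have := h2 p hp
    omega
  · intro p hp
    show p.1 < max p₃.2 p₁.1 ∨ p.2 < max p₂.2 p₁.2
    have := h1 p hp
    omega

lemma dhat_span_eq {U₃ U₂ U₁ : Finset (ℕ × ℕ)} :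
    Ideal.span ((fun w : ℕ × ℕ × ℕ => genProd A B C w.1 w.2.1 w.2.2) ''
        Dhat A B C U₃ U₂ U₁) =
    Ideal.span ((fun w : ℕ × ℕ × ℕ => genProd A B C w.1 w.2.1 w.2.2) ''
        {w | Cov U₃ U₂ U₁ w}) := by
  apply le_antisymm
  · apply Ideal.span_mono
    apply Set.image_mono
    exact fun t ht => dset_subset_cov hFA hFB hFC hAind hBind hCind ht.1
  · rw [Ideal.span_le]
    rintro x ⟨t, hcov, rfl⟩
    obtain ⟨hc3, hc2, hc1⟩ := hcov
    -- minimal degrees in each direction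
    obtain ⟨p₃, hp₃S, hp₃le, hp₃min⟩ := exists_minimal_le₂ (t.1 + t.2.1)
      {d : ℕ × ℕ | genProd A B C d.1 d.2 0 ∈ idealPart A B U₃} (t.1, t.2.1) le_rfl
      ((charAB hFA hFB hFC hAind hBind hCind).mpr hc3)
    obtain ⟨p₂, hp₂S, hp₂le, hp₂min⟩ := exists_minimal_le₂ (t.1 + t.2.2)
      {d : ℕ × ℕ | genProd A B C d.1 0 d.2 ∈ idealPart A C U₂} (t.1, t.2.2) le_rfl
      ((charAC hFA hFB hFC hAind hBind hCind).mpr hc2)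
    obtain ⟨p₁, hp₁S, hp₁le, hp₁min⟩ := exists_minimal_le₂ (t.2.1 + t.2.2)
      {d : ℕ × ℕ | genProd A B C 0 d.1 d.2 ∈ idealPart B C U₁} (t.2.1, t.2.2) le_rfl
      ((charBC hFA hFB hFC hAind hBind hCind).mpr hc1)
    have ht' : ((max p₃.1 p₂.1, max p₃.2 p₁.1, max p₂.2 p₁.2) : ℕ × ℕ × ℕ) ∈
        Dset A B C U₃ U₂ U₁ :=
      ⟨p₃, ⟨hp₃S, hp₃min⟩, p₂, ⟨hp₂S, hp₂min⟩, p₁, ⟨hp₁S, hp₁min⟩, rfl⟩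
    have ht'le : ((max p₃.1 p₂.1, max p₃.2 p₁.1, max p₂.2 p₁.2) : ℕ × ℕ × ℕ) ≤ t := by
      obtain ⟨ha3, hb3⟩ := Prod.le_def.mp hp₃le
      obtain ⟨ha2, hb2⟩ := Prod.le_def.mp hp₂le
      obtain ⟨ha1, hb1⟩ := Prod.le_def.mp hp₁le
      refine Prod.le_def.mpr ⟨?_, Prod.le_def.mpr ⟨?_, ?_⟩⟩ <;> simp only <;> omega
    obtain ⟨t'', ht''S, ht''le, ht''min⟩ := exists_minimal_le₃
      (t.1 + t.2.1 + t.2.2) (Dset A B C U₃ U₂ U₁) _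
      (by
        obtain ⟨x1, x23⟩ := Prod.le_def.mp ht'le
        obtain ⟨x2, x3⟩ := Prod.le_def.mp x23
        simp only at x1 x2 x3 ⊢
        omega) ht'
    have ht''hat : t'' ∈ Dhat A B C U₃ U₂ U₁ := ⟨ht''S, ht''min⟩
    have hdvd : genProd A B C t''.1 t''.2.1 t''.2.2 ∣ genProd A B C t.1 t.2.1 t.2.2 := by
      have hle2 := le_trans ht''le ht'le
      obtain ⟨x1, x23⟩ := Prod.le_def.mp hle2
      obtain ⟨x2, x3⟩ := Prod.le_def.mp x23
      exact genProd_dvd x1 x2 x3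
    obtain ⟨e, he⟩ := hdvd
    show genProd A B C t.1 t.2.1 t.2.2 ∈ _
    rw [he]
    exact SetLike.mem_coe.mpr (Ideal.mul_mem_right e _ (Ideal.subset_span ⟨t'', ht''hat, rfl⟩))

end SpanEq


/-- the combined weight with values in `Fin 3 → ℕ` -/
def W3 : Fin 3 × Fin 2 → (Fin 3 → ℕ) := fun p t => if p.1 = t then 1 else 0

lemma weight_W3_apply (m : (Fin 3 × Fin 2) →₀ ℕ) (t : Fin 3) :
    Finsupp.weight W3 m t = Finsupp.weight (triWeight t) m := by
  rw [Finsupp.weight_apply, Finsupp.weight_apply, Finsupp.sum, Finsupp.sum,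
    Finset.sum_apply]
  apply Finset.sum_congr rfl
  intro p _
  simp [W3, triWeight, Pi.smul_apply, smul_eq_mul]

lemma triHom_isWH {F : MvPolynomial (Fin 3 × Fin 2) K} {d : Fin 3 → ℕ}
    (h : TriHomogeneous F d) : F.IsWeightedHomogeneous W3 d := by
  intro m hm
  funext t
  rw [weight_W3_apply]
  exact h t hm

section Grading

variable {A B C : ℕ → MvPolynomial (Fin 3 × Fin 2) K}

lemma genProd_isWH (hAdeg : ∀ n, TriHomogeneous (A n) ![1, 0, 0])
    (hBdeg : ∀ n, TriHomogeneous (B n) ![0, 1, 0])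
    (hCdeg : ∀ n, TriHomogeneous (C n) ![0, 0, 1]) (a b c : ℕ) :
    IsWeightedHomogeneous W3 (genProd A B C a b c) ![a, b, c] := by
  have hA : IsWeightedHomogeneous W3 (∏ i ∈ Finset.range a, A i)
      (∑ _i ∈ Finset.range a, (![1,0,0] : Fin 3 → ℕ)) :=
    IsWeightedHomogeneous.prod _ _ _ (fun i _ => triHom_isWH (hAdeg i))
  have hB : IsWeightedHomogeneous W3 (∏ j ∈ Finset.range b, B j)
      (∑ _j ∈ Finset.range b, (![0,1,0] : Fin 3 → ℕ)) :=
    IsWeightedHomogeneous.prod _ _ _ (fun j _ => triHom_isWH (hBdeg j))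
  have hC : IsWeightedHomogeneous W3 (∏ k ∈ Finset.range c, C k)
      (∑ _k ∈ Finset.range c, (![0,0,1] : Fin 3 → ℕ)) :=
    IsWeightedHomogeneous.prod _ _ _ (fun k _ => triHom_isWH (hCdeg k))
  have htotal := (hA.mul hB).mul hC
  have hdeg : ((∑ _i ∈ Finset.range a, (![1,0,0] : Fin 3 → ℕ)) +
      (∑ _j ∈ Finset.range b, (![0,1,0] : Fin 3 → ℕ))) +
      (∑ _k ∈ Finset.range c, (![0,0,1] : Fin 3 → ℕ)) = ![a, b, c] := by
    funext t
    simp only [Finset.sum_const, Finset.card_range, Pi.add_apply, Pi.smul_apply, smul_eq_mul]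
    fin_cases t <;> simp
  rw [hdeg] at htotal
  exact htotal

lemma whc_mul_eq_zero {s : MvPolynomial (Fin 3 × Fin 2) K} {e d : Fin 3 → ℕ}
    (hs : IsWeightedHomogeneous W3 s e) (hne : ¬ e ≤ d)
    (f : MvPolynomial (Fin 3 × Fin 2) K) :
    weightedHomogeneousComponent W3 d (f * s) = 0 := by
  classical
  apply MvPolynomial.ext
  intro m
  rw [coeff_weightedHomogeneousComponent, coeff_zero]
  split_ifs with hw
  · by_contra hc
    have hsup : m ∈ (f * s).support := mem_support_iff.mpr hc
    have hsub := MvPolynomial.support_mul f s hsup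
    rcases Finset.mem_add.mp hsub with ⟨m₁, h₁, m₂, h₂, rfl⟩
    have he : Finsupp.weight W3 m₂ = e := hs (mem_support_iff.mp h₂)
    apply hne
    rw [← hw, map_add, he]
    exact le_add_self
  · rfl

lemma whc_self {g : MvPolynomial (Fin 3 × Fin 2) K} {d : Fin 3 → ℕ}
    (hg : IsWeightedHomogeneous W3 g d) :
    weightedHomogeneousComponent W3 d g = g := by
  classical
  apply MvPolynomial.ext
  intro m
  rw [coeff_weightedHomogeneousComponent]
  split_ifs with hw
  · rfl
  · exact (hg.coeff_eq_zero m hw).symm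

end Grading


/-- if `X` is a Ferrers variety of lines (all three index sets are
downward closed), then `I_X` is minimally generated by the products
`∏_{i ≤ a} A_i ∏_{j ≤ b} B_j ∏_{k ≤ c} C_k` for `(a,b,c) ∈ D̂(X)`. -/
theorem ferrers_lineIdeal_minimal_generators
    (A B C : ℕ → MvPolynomial (Fin 3 × Fin 2) K)
    (hAdeg : ∀ n, TriHomogeneous (A n) ![1, 0, 0])
    (hBdeg : ∀ n, TriHomogeneous (B n) ![0, 1, 0])
    (hCdeg : ∀ n, TriHomogeneous (C n) ![0, 0, 1])
    (hAind : ∀ m n, m ≠ n → ∀ s : K, A m ≠ s • A n)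
    (hBind : ∀ m n, m ≠ n → ∀ s : K, B m ≠ s • B n)
    (hCind : ∀ m n, m ≠ n → ∀ s : K, C m ≠ s • C n)
    (U₃ U₂ U₁ : Finset (ℕ × ℕ))
    (hU₃ : ∀ p ∈ U₃, ∀ q : ℕ × ℕ, q ≤ p → q ∈ U₃)
    (hU₂ : ∀ p ∈ U₂, ∀ q : ℕ × ℕ, q ≤ p → q ∈ U₂)
    (hU₁ : ∀ p ∈ U₁, ∀ q : ℕ × ℕ, q ≤ p → q ∈ U₁) :
    Ideal.span ((fun t : ℕ × ℕ × ℕ => genProd A B C t.1 t.2.1 t.2.2) ''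
        Dhat A B C U₃ U₂ U₁) = lineIdeal A B C U₃ U₂ U₁ ∧
      ∀ g ∈ (fun t : ℕ × ℕ × ℕ => genProd A B C t.1 t.2.1 t.2.2) '' Dhat A B C U₃ U₂ U₁,
        Ideal.span (((fun t : ℕ × ℕ × ℕ => genProd A B C t.1 t.2.1 t.2.2) ''
          Dhat A B C U₃ U₂ U₁) \ {g}) ≠ lineIdeal A B C U₃ U₂ U₁ := by
  -- convert the degree hypotheses into the `IsForm` language
  have hFA : ∀ n, IsForm 0 (A n) := by
    intro n
    have hdeq : (![1, 0, 0] : Fin 3 → ℕ) = fun t' : Fin 3 => if t' = 0 then 1 else 0 := by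
      funext t'; fin_cases t' <;> rfl
    obtain ⟨a, b, hab⟩ := exists_lf (t := 0) (hdeq ▸ hAdeg n)
    have hne : A n ≠ 0 := fun h0 =>
      hAind n (n+1) (by omega) 0 (by rw [h0, zero_smul])
    refine ⟨a, b, hab, ?_⟩
    rintro ⟨rfl, rfl⟩
    exact hne (by rw [hab, lf_zero])
  have hFB : ∀ n, IsForm 1 (B n) := by
    intro n
    have hdeq : (![0, 1, 0] : Fin 3 → ℕ) = fun t' : Fin 3 => if t' = 1 then 1 else 0 := by
      funext t'; fin_cases t' <;> rfl
    obtain ⟨a, b, hab⟩ := exists_lf (t := 1) (hdeq ▸ hBdeg n)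
    have hne : B n ≠ 0 := fun h0 =>
      hBind n (n+1) (by omega) 0 (by rw [h0, zero_smul])
    refine ⟨a, b, hab, ?_⟩
    rintro ⟨rfl, rfl⟩
    exact hne (by rw [hab, lf_zero])
  have hFC : ∀ n, IsForm 2 (C n) := by
    intro n
    have hdeq : (![0, 0, 1] : Fin 3 → ℕ) = fun t' : Fin 3 => if t' = 2 then 1 else 0 := by
      funext t'; fin_cases t' <;> rfl
    obtain ⟨a, b, hab⟩ := exists_lf (t := 2) (hdeq ▸ hCdeg n)
    have hne : C n ≠ 0 := fun h0 =>
      hCind n (n+1) (by omega) 0 (by rw [h0, zero_smul])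
    refine ⟨a, b, hab, ?_⟩
    rintro ⟨rfl, rfl⟩
    exact hne (by rw [hab, lf_zero])
  have hmain : Ideal.span ((fun t : ℕ × ℕ × ℕ => genProd A B C t.1 t.2.1 t.2.2) ''
      Dhat A B C U₃ U₂ U₁) = lineIdeal A B C U₃ U₂ U₁ := by
    rw [dhat_span_eq hFA hFB hFC hAind hBind hCind]
    apply le_antisymm
    · rw [Ideal.span_le]
      rintro x ⟨w, hw, rfl⟩
      exact SetLike.mem_coe.mpr (cov_genProd_mem_lineIdeal hw)
    · exact main_incl hFA hFB hFC hAind hBind hCind (U₃.card + U₂.card + U₁.card)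
        U₃ U₂ U₁ le_rfl hU₃ hU₂ hU₁
  refine ⟨hmain, ?_⟩
  rintro g ⟨t, htDhat, rfl⟩ hspan
  -- `g = genProd t` would lie in the span of the other generators
  have hgmem : genProd A B C t.1 t.2.1 t.2.2 ∈ lineIdeal A B C U₃ U₂ U₁ :=
    cov_genProd_mem_lineIdeal (dset_subset_cov hFA hFB hFC hAind hBind hCind htDhat.1)
  rw [← hspan] at hgmem
  -- kill it with the graded component of degree `![t.1, t.2.1, t.2.2]`
  set d : Fin 3 → ℕ := ![t.1, t.2.1, t.2.2] with hd
  have key : ∀ x ∈ Ideal.span (((fun t : ℕ × ℕ × ℕ => genProd A B C t.1 t.2.1 t.2.2) ''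
      Dhat A B C U₃ U₂ U₁) \ {(fun t : ℕ × ℕ × ℕ => genProd A B C t.1 t.2.1 t.2.2) t}),
      ∀ r : MvPolynomial (Fin 3 × Fin 2) K,
        weightedHomogeneousComponent W3 d (r * x) = 0 := by
    intro x hx
    refine Submodule.span_induction ?_ ?_ ?_ ?_ hx
    · rintro x ⟨⟨t', ht', rfl⟩, hneq⟩ r
      have hnle : ¬ t' ≤ t := by
        intro hle
        exact hneq (by
          rw [htDhat.2 t' ht'.1 hle]
          exact Set.mem_singleton _)
      have hnled : ¬ (![t'.1, t'.2.1, t'.2.2] : Fin 3 → ℕ) ≤ d := by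
        intro hle
        apply hnle
        have h0 := hle 0
        have h1 := hle 1
        have h2 := hle 2
        simp only [hd, Matrix.cons_val_zero, Matrix.cons_val_one, Matrix.head_cons,
          Matrix.cons_val_two, Matrix.tail_cons] at h0 h1 h2
        exact Prod.le_def.mpr ⟨h0, Prod.le_def.mpr ⟨h1, h2⟩⟩
      exact whc_mul_eq_zero (genProd_isWH hAdeg hBdeg hCdeg t'.1 t'.2.1 t'.2.2) hnled r
    · intro r
      rw [mul_zero, map_zero]
    · intro x y _ _ px py r
      rw [mul_add, map_add, px r, py r, add_zero]
    · intro a x _ px r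
      rw [smul_eq_mul, ← mul_assoc, px (r * a)]
  have h0 := key _ hgmem 1
  rw [one_mul, whc_self (by rw [hd]; exact genProd_isWH hAdeg hBdeg hCdeg t.1 t.2.1 t.2.2)]
    at h0
  exact genProd_ne_zero hFA hFB hFC t.1 t.2.1 t.2.2 h0

end
end

section
/- Let X be a variety of lines of ℙ¹×ℙ¹×ℙ¹ whose ideal is I_X = (F₁, F₂) with deg F₁ = a·e_i and deg F₂ = b·e_j + c·e_k where {i,j,k} = {1,2,3}. Then F₁, F₂ is a regular sequence; conversely, if I_X is generated by a regular sequence of length 2, then the two generators have degrees of this form (one supported on a single coordinate direction, the other on the complementary two). -/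
open MvPolynomial

noncomputable section

variable {K : Type*} [Field K]

section Aux

set_option linter.unusedSectionVars false

variable {σ : Type*} [DecidableEq σ]

private lemma aux_coeff_mul_eq_zero {w : σ → ℕ} {F g : MvPolynomial σ K} {n : ℕ}
    (hF : F.IsWeightedHomogeneous w n) (hn : n ≠ 0) {μ : σ →₀ ℕ}
    (hμ : Finsupp.weight w μ = 0) : MvPolynomial.coeff μ (g * F) = 0 := by
  rw [MvPolynomial.coeff_mul]
  refine Finset.sum_eq_zero fun x hx => ?_
  rcases eq_or_ne (MvPolynomial.coeff x.2 F) 0 with h | h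
  · rw [h, mul_zero]
  · exfalso
    have hadd : Finsupp.weight w x.1 + Finsupp.weight w x.2 = 0 := by
      rw [← map_add, Finset.HasAntidiagonal.mem_antidiagonal.mp hx, hμ]
    have hF2 := hF h
    exact hn (by omega)

private lemma aux_eq_zero_of_mem_span {w : σ → ℕ} {F₁ F₂ z : MvPolynomial σ K} {n₁ n₂ : ℕ}
    (h1 : F₁.IsWeightedHomogeneous w n₁) (h2 : F₂.IsWeightedHomogeneous w n₂)
    (hn₁ : n₁ ≠ 0) (hn₂ : n₂ ≠ 0) (hz : z.IsWeightedHomogeneous w 0)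
    (hmem : z ∈ Ideal.span {F₁, F₂}) : z = 0 := by
  obtain ⟨g, h, hgh⟩ := Ideal.mem_span_pair.mp hmem
  have hco : ∀ μ, MvPolynomial.coeff μ z = 0 := by
    intro μ
    rcases eq_or_ne (Finsupp.weight w μ) 0 with hw0 | hw0
    · rw [← hgh, MvPolynomial.coeff_add, aux_coeff_mul_eq_zero h1 hn₁ hw0,
        aux_coeff_mul_eq_zero h2 hn₂ hw0, add_zero]
    · by_contra hc
      exact hw0 (hz hc)
  exact MvPolynomial.ext _ _ fun μ => (hco μ).trans (MvPolynomial.coeff_zero μ).symm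

private lemma aux_homog_of_dvd {w : σ → ℕ} {d r : MvPolynomial σ K}
    (hs : (d * r).IsWeightedHomogeneous w 0) (hd : d ≠ 0) (hr : r ≠ 0) :
    d.IsWeightedHomogeneous w 0 := by
  classical
  set m := d.support.sup fun μ => Finsupp.weight w μ with hm
  set n := r.support.sup fun μ => Finsupp.weight w μ with hn
  have key : (MvPolynomial.weightedHomogeneousComponent w m d) *
      (MvPolynomial.weightedHomogeneousComponent w n r) =
      MvPolynomial.weightedHomogeneousComponent w (m + n) (d * r) := by
    apply MvPolynomial.ext; intro μ
    rw [MvPolynomial.coeff_mul, MvPolynomial.coeff_weightedHomogeneousComponent,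
      MvPolynomial.coeff_mul]
    split_ifs with hmn
    · refine Finset.sum_congr rfl fun x hx => ?_
      rw [MvPolynomial.coeff_weightedHomogeneousComponent,
        MvPolynomial.coeff_weightedHomogeneousComponent]
      rcases eq_or_ne (MvPolynomial.coeff x.1 d) 0 with h1 | h1
      · simp [h1]
      rcases eq_or_ne (MvPolynomial.coeff x.2 r) 0 with h2 | h2
      · simp [h2]
      have hx1 : Finsupp.weight w x.1 ≤ m := Finset.le_sup (MvPolynomial.mem_support_iff.mpr h1)
      have hx2 : Finsupp.weight w x.2 ≤ n := Finset.le_sup (MvPolynomial.mem_support_iff.mpr h2)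
      have hadd : Finsupp.weight w x.1 + Finsupp.weight w x.2 = m + n := by
        rw [← map_add, Finset.HasAntidiagonal.mem_antidiagonal.mp hx, hmn]
      rw [if_pos (by omega), if_pos (by omega)]
    · refine Finset.sum_eq_zero fun x hx => ?_
      rw [MvPolynomial.coeff_weightedHomogeneousComponent,
        MvPolynomial.coeff_weightedHomogeneousComponent]
      rcases eq_or_ne (Finsupp.weight w x.1) m with ha | ha
      · rcases eq_or_ne (Finsupp.weight w x.2) n with hb | hb
        · exact absurd (show Finsupp.weight w μ = m + n by
            rw [← Finset.HasAntidiagonal.mem_antidiagonal.mp hx, map_add, ha, hb]) hmn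
        · rw [if_neg hb, mul_zero]
      · rw [if_neg ha, zero_mul]
  obtain ⟨μd, hμd, hμdm⟩ := Finset.exists_mem_eq_sup d.support
    (MvPolynomial.support_nonempty.mpr hd) (fun μ => Finsupp.weight w μ)
  obtain ⟨μr, hμr, hμrm⟩ := Finset.exists_mem_eq_sup r.support
    (MvPolynomial.support_nonempty.mpr hr) (fun μ => Finsupp.weight w μ)
  have hdm : MvPolynomial.weightedHomogeneousComponent w m d ≠ 0 := by
    intro h0
    have hc := MvPolynomial.coeff_weightedHomogeneousComponent (w := w) m d μd
    rw [h0, MvPolynomial.coeff_zero, if_pos hμdm.symm] at hc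
    exact (MvPolynomial.mem_support_iff.mp hμd) hc.symm
  have hrn : MvPolynomial.weightedHomogeneousComponent w n r ≠ 0 := by
    intro h0
    have hc := MvPolynomial.coeff_weightedHomogeneousComponent (w := w) n r μr
    rw [h0, MvPolynomial.coeff_zero, if_pos hμrm.symm] at hc
    exact (MvPolynomial.mem_support_iff.mp hμr) hc.symm
  have hne0 : MvPolynomial.weightedHomogeneousComponent w (m + n) (d * r) ≠ 0 := by
    rw [← key]; exact mul_ne_zero hdm hrn
  obtain ⟨μ0, hμ0⟩ := MvPolynomial.ne_zero_iff.mp hne0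
  have hcc := MvPolynomial.coeff_weightedHomogeneousComponent (w := w) (m + n) (d * r) μ0
  have hm0 : m = 0 := by
    by_cases hcond : Finsupp.weight w μ0 = m + n
    · have h1 : MvPolynomial.coeff μ0 (d * r) ≠ 0 := by
        rw [hcc, if_pos hcond] at hμ0; exact hμ0
      have h2 := hs h1
      omega
    · rw [hcc, if_neg hcond] at hμ0; exact absurd rfl hμ0
  intro μ hμ
  have hle : Finsupp.weight w μ ≤ m := Finset.le_sup (MvPolynomial.mem_support_iff.mpr hμ)
  omega

private lemma aux_prod_homog {w : σ → ℕ} {ι : Type*} (s : Finset ι)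
    (f : ι → MvPolynomial σ K) (h : ∀ i ∈ s, (f i).IsWeightedHomogeneous w 0) :
    (∏ i ∈ s, f i).IsWeightedHomogeneous w 0 := by
  have := MvPolynomial.IsWeightedHomogeneous.prod s f (fun _ => 0) h
  simpa using this

private lemma aux_mem_span_pair_left {R : Type*} [CommRing R] {f g x : R} (h : f ∣ x) :
    x ∈ Ideal.span {f, g} := by
  obtain ⟨c, rfl⟩ := h
  exact Ideal.mul_mem_right _ _ (Ideal.subset_span (Set.mem_insert _ _))

private lemma aux_mem_span_pair_right {R : Type*} [CommRing R] {f g x : R} (h : g ∣ x) :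
    x ∈ Ideal.span {f, g} := by
  obtain ⟨c, rfl⟩ := h
  exact Ideal.mul_mem_right _ _ (Ideal.subset_span (Set.mem_insert_of_mem _ rfl))

private lemma aux_exists_C {q : MvPolynomial (Fin 3 × Fin 2) K}
    (h : ∀ t : Fin 3, q.IsWeightedHomogeneous (triWeight t) 0) :
    ∃ c : K, q = MvPolynomial.C c := by
  refine ⟨MvPolynomial.coeff 0 q, MvPolynomial.ext _ _ fun μ => ?_⟩
  rcases eq_or_ne μ 0 with rfl | hμ
  · simp
  · have hC : MvPolynomial.coeff μ (MvPolynomial.C (MvPolynomial.coeff 0 q) :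
        MvPolynomial (Fin 3 × Fin 2) K) = 0 := by
      simp [MvPolynomial.coeff_C, hμ, Ne.symm hμ]
    rw [hC]
    by_contra hc
    obtain ⟨v, hv⟩ : ∃ v, μ v ≠ 0 := by
      by_contra hall
      push_neg at hall
      exact hμ (Finsupp.ext fun a => hall a)
    have h0 := h v.1 hc
    rw [Finsupp.weight_apply, Finsupp.sum] at h0
    have hvmem : v ∈ μ.support := Finsupp.mem_support_iff.mpr hv
    have hterm := (Finset.sum_eq_zero_iff.mp h0) v hvmem
    rw [triWeight] at hterm
    simp at hterm
    exact hv hterm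

private lemma aux_isUnit_C {c : K} (hc : c ≠ 0) :
    IsUnit (MvPolynomial.C c : MvPolynomial (Fin 3 × Fin 2) K) :=
  IsUnit.of_mul_eq_one (MvPolynomial.C c⁻¹)
    (by rw [← map_mul, mul_inv_cancel₀ hc, map_one])

end Aux

/-- let `X` be a (nonempty) variety of lines of `ℙ¹×ℙ¹×ℙ¹`.  If
`I_X = (F₁, F₂)` with `deg F₁ = a·e_i` and `deg F₂ = b·e_j + c·e_k`, `{i,j,k} = {1,2,3}`,
then `F₁, F₂` is a regular sequence; conversely, if `I_X` is generated by a regular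
sequence of length 2 (of trihomogeneous elements), then the two generators have degrees
of this form. -/
theorem lineIdeal_complete_intersection
    (A B C : ℕ → MvPolynomial (Fin 3 × Fin 2) K)
    (hAdeg : ∀ n, TriHomogeneous (A n) ![1, 0, 0])
    (hBdeg : ∀ n, TriHomogeneous (B n) ![0, 1, 0])
    (hCdeg : ∀ n, TriHomogeneous (C n) ![0, 0, 1])
    (hAind : ∀ m n, m ≠ n → ∀ s : K, A m ≠ s • A n)
    (hBind : ∀ m n, m ≠ n → ∀ s : K, B m ≠ s • B n)
    (hCind : ∀ m n, m ≠ n → ∀ s : K, C m ≠ s • C n)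
    (U₃ U₂ U₁ : Finset (ℕ × ℕ))
    (hne : U₃.Nonempty ∨ U₂.Nonempty ∨ U₁.Nonempty) :
    (∀ F₁ F₂ : MvPolynomial (Fin 3 × Fin 2) K, ∀ i j k : Fin 3, ∀ a b c : ℕ,
        i ≠ j → i ≠ k → j ≠ k →
        TriHomogeneous F₁ (fun t => if t = i then a else 0) →
        TriHomogeneous F₂ (fun t => if t = j then b else if t = k then c else 0) →
        lineIdeal A B C U₃ U₂ U₁ = Ideal.span {F₁, F₂} →
        RingTheory.Sequence.IsRegular (MvPolynomial (Fin 3 × Fin 2) K) [F₁, F₂]) ∧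
    ((∃ F₁ F₂ : MvPolynomial (Fin 3 × Fin 2) K, (∃ d₁ d₂ : Fin 3 → ℕ,
          TriHomogeneous F₁ d₁ ∧ TriHomogeneous F₂ d₂) ∧
        lineIdeal A B C U₃ U₂ U₁ = Ideal.span {F₁, F₂} ∧
        RingTheory.Sequence.IsRegular (MvPolynomial (Fin 3 × Fin 2) K) [F₁, F₂]) →
      ∃ F₁ F₂ : MvPolynomial (Fin 3 × Fin 2) K, ∃ i j k : Fin 3, ∃ a b c : ℕ,
        i ≠ j ∧ i ≠ k ∧ j ≠ k ∧
        TriHomogeneous F₁ (fun t => if t = i then a else 0) ∧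
        TriHomogeneous F₂ (fun t => if t = j then b else if t = k then c else 0) ∧
        lineIdeal A B C U₃ U₂ U₁ = Ideal.span {F₁, F₂} ∧
        RingTheory.Sequence.IsRegular (MvPolynomial (Fin 3 × Fin 2) K) [F₁, F₂]) := by
  classical
  -- nonvanishing of the linear forms
  have hA0 : ∀ n, A n ≠ 0 := fun n => by simpa using hAind n (n + 1) (by omega) 0
  have hB0 : ∀ n, B n ≠ 0 := fun n => by simpa using hBind n (n + 1) (by omega) 0
  have hC0 : ∀ n, C n ≠ 0 := fun n => by simpa using hCind n (n + 1) (by omega) 0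
  -- homogeneity of the linear forms in the "other" weights
  have hAw : ∀ n (t : Fin 3), t ≠ 0 → (A n).IsWeightedHomogeneous (triWeight t) 0 := by
    intro n t ht
    fin_cases t
    · simp at ht
    · simpa using hAdeg n 1
    · simpa using hAdeg n 2
  have hBw : ∀ n (t : Fin 3), t ≠ 1 → (B n).IsWeightedHomogeneous (triWeight t) 0 := by
    intro n t ht
    fin_cases t
    · simpa using hBdeg n 0
    · simp at ht
    · simpa using hBdeg n 2
  have hCw : ∀ n (t : Fin 3), t ≠ 2 → (C n).IsWeightedHomogeneous (triWeight t) 0 := by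
    intro n t ht
    fin_cases t
    · simpa using hCdeg n 0
    · simpa using hCdeg n 1
    · simp at ht
  have hA1 : ∀ n, (A n).IsWeightedHomogeneous (triWeight 0) 1 := fun n => by
    simpa using hAdeg n 0
  have hB1 : ∀ n, (B n).IsWeightedHomogeneous (triWeight 1) 1 := fun n => by
    simpa using hBdeg n 1
  have hC1 : ∀ n, (C n).IsWeightedHomogeneous (triWeight 2) 1 := fun n => by
    simpa using hCdeg n 2
  -- the witness products z t ∈ I with no variables of direction t
  let z : Fin 3 → MvPolynomial (Fin 3 × Fin 2) K := fun t =>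
    (∏ p ∈ U₃, if t = 0 then B p.2 else A p.1) *
    (∏ p ∈ U₂, if t = 2 then A p.1 else C p.2) *
    (∏ p ∈ U₁, if t = 1 then C p.2 else B p.1)
  have hz_eq : ∀ t, z t =
      (∏ p ∈ U₃, if t = 0 then B p.2 else A p.1) *
      (∏ p ∈ U₂, if t = 2 then A p.1 else C p.2) *
      (∏ p ∈ U₁, if t = 1 then C p.2 else B p.1) := fun t => rfl
  have hzne : ∀ t, z t ≠ 0 := by
    intro t
    rw [hz_eq]
    refine mul_ne_zero (mul_ne_zero ?_ ?_) ?_ <;>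
      refine Finset.prod_ne_zero_iff.mpr fun p hp => ?_ <;>
        split_ifs <;>
          first
            | exact hA0 _
            | exact hB0 _
            | exact hC0 _
  have hzhom : ∀ t, (z t).IsWeightedHomogeneous (triWeight t) 0 := by
    intro t
    rw [hz_eq]
    have h3 : (∏ p ∈ U₃, if t = 0 then B p.2 else A p.1).IsWeightedHomogeneous (triWeight t) 0 := by
      refine aux_prod_homog _ _ fun p hp => ?_
      split_ifs with h
      · subst h; exact hBw p.2 0 (by decide)
      · exact hAw p.1 t h
    have h2' : (∏ p ∈ U₂, if t = 2 then A p.1 else C p.2).IsWeightedHomogeneous (triWeight t) 0 := by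
      refine aux_prod_homog _ _ fun p hp => ?_
      split_ifs with h
      · subst h; exact hAw p.1 2 (by decide)
      · exact hCw p.2 t h
    have h1' : (∏ p ∈ U₁, if t = 1 then C p.2 else B p.1).IsWeightedHomogeneous (triWeight t) 0 := by
      refine aux_prod_homog _ _ fun p hp => ?_
      split_ifs with h
      · subst h; exact hCw p.2 1 (by decide)
      · exact hBw p.1 t h
    simpa using (h3.mul h2').mul h1'
  have hzmem : ∀ t, z t ∈ lineIdeal A B C U₃ U₂ U₁ := by
    intro t
    simp only [lineIdeal, idealPart, Submodule.mem_inf, Submodule.mem_iInf]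
    refine ⟨⟨fun p hp => ?_, fun p hp => ?_⟩, fun p hp => ?_⟩
    · have hd : (if t = 0 then B p.2 else A p.1) ∣ z t := by
        rw [hz_eq]
        exact ((Finset.dvd_prod_of_mem _ hp).mul_right _).mul_right _
      split_ifs at hd with h
      · exact aux_mem_span_pair_right hd
      · exact aux_mem_span_pair_left hd
    · have hd : (if t = 2 then A p.1 else C p.2) ∣ z t := by
        rw [hz_eq]
        exact ((Finset.dvd_prod_of_mem _ hp).mul_left _).mul_right _
      split_ifs at hd with h
      · exact aux_mem_span_pair_left hd
      · exact aux_mem_span_pair_right hd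
    · have hd : (if t = 1 then C p.2 else B p.1) ∣ z t := by
        rw [hz_eq]
        exact (Finset.dvd_prod_of_mem _ hp).mul_left _
      split_ifs at hd with h
      · exact aux_mem_span_pair_right hd
      · exact aux_mem_span_pair_left hd
  -- the ideal is proper
  have hproper : lineIdeal A B C U₃ U₂ U₁ ≠ ⊤ := by
    intro htop
    have h1 : (1 : MvPolynomial (Fin 3 × Fin 2) K) ∈ lineIdeal A B C U₃ U₂ U₁ := by
      rw [htop]; exact Submodule.mem_top
    simp only [lineIdeal, idealPart, Submodule.mem_inf, Submodule.mem_iInf] at h1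
    obtain ⟨⟨h3, h2⟩, h1'⟩ := h1
    have hconst : ∀ X Y : MvPolynomial (Fin 3 × Fin 2) K,
        (∃ t, X.IsWeightedHomogeneous (triWeight t) 1) →
        (∃ t, Y.IsWeightedHomogeneous (triWeight t) 1) →
        (1 : MvPolynomial (Fin 3 × Fin 2) K) ∉ Ideal.span {X, Y} := by
      rintro X Y ⟨tX, hX⟩ ⟨tY, hY⟩ hmem
      obtain ⟨g, h, hgh⟩ := Ideal.mem_span_pair.mp hmem
      have hcz : MvPolynomial.coeff 0 (g * X + h * Y) = 0 := by
        rw [MvPolynomial.coeff_add,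
          aux_coeff_mul_eq_zero hX one_ne_zero (map_zero _),
          aux_coeff_mul_eq_zero hY one_ne_zero (map_zero _), add_zero]
      rw [hgh] at hcz
      simp at hcz
    rcases hne with ⟨p, hp⟩ | ⟨p, hp⟩ | ⟨p, hp⟩
    · exact hconst _ _ ⟨0, hA1 p.1⟩ ⟨1, hB1 p.2⟩ (h3 p hp)
    · exact hconst _ _ ⟨0, hA1 p.1⟩ ⟨2, hC1 p.2⟩ (h2 p hp)
    · exact hconst _ _ ⟨1, hB1 p.1⟩ ⟨2, hC1 p.2⟩ (h1' p hp)
  -- the ideal is not principal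
  have hNP : ∀ G : MvPolynomial (Fin 3 × Fin 2) K,
      lineIdeal A B C U₃ U₂ U₁ ≠ Ideal.span {G} := by
    intro G hG
    have hzmemG : ∀ t, G ∣ z t := by
      intro t
      have := hzmem t
      rw [hG] at this
      exact Ideal.mem_span_singleton.mp this
    have hG0 : G ≠ 0 := by
      rintro rfl
      exact hzne 0 (zero_dvd_iff.mp (hzmemG 0))
    have hGu : ¬IsUnit G := fun hu => hproper (hG.trans (Ideal.span_singleton_eq_top.mpr hu))
    obtain ⟨q, hqirr, hqdvd⟩ := WfDvdMonoid.exists_irreducible_factor hGu hG0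
    have hq : Prime q := (UniqueFactorizationMonoid.irreducible_iff_prime).mp hqirr
    have hqh : ∀ t : Fin 3, q.IsWeightedHomogeneous (triWeight t) 0 := by
      intro t
      obtain ⟨r, hr⟩ := hqdvd.trans (hzmemG t)
      have hzh := hzhom t; rw [hr] at hzh
      have hzn := hzne t; rw [hr] at hzn
      exact aux_homog_of_dvd hzh (left_ne_zero_of_mul hzn) (right_ne_zero_of_mul hzn)
    obtain ⟨c, rfl⟩ := aux_exists_C hqh
    have hcne : c ≠ 0 := fun h => hq.ne_zero (by rw [h, map_zero])
    exact hq.not_unit (aux_isUnit_C hcne)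
  -- PART 1
  have part1 : ∀ F₁ F₂ : MvPolynomial (Fin 3 × Fin 2) K, ∀ i j k : Fin 3, ∀ a b c : ℕ,
      i ≠ j → i ≠ k → j ≠ k →
      TriHomogeneous F₁ (fun t => if t = i then a else 0) →
      TriHomogeneous F₂ (fun t => if t = j then b else if t = k then c else 0) →
      lineIdeal A B C U₃ U₂ U₁ = Ideal.span {F₁, F₂} →
      RingTheory.Sequence.IsRegular (MvPolynomial (Fin 3 × Fin 2) K) [F₁, F₂] := by
    intro F₁ F₂ i j k a b c hij hik hjk h1 h2 hspan
    have hF₁0 : F₁ ≠ 0 := by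
      rintro rfl
      exact hNP F₂ (hspan.trans Submodule.span_insert_zero)
    have hF₂0 : F₂ ≠ 0 := by
      rintro rfl
      refine hNP F₁ (hspan.trans ?_)
      rw [Set.pair_comm F₁ 0]
      exact Submodule.span_insert_zero
    have h2i : F₂.IsWeightedHomogeneous (triWeight i) 0 := by
      have h' := h2 i
      simp only [if_neg hij, if_neg hik] at h'
      exact h'
    have h1t : ∀ t, t ≠ i → F₁.IsWeightedHomogeneous (triWeight t) 0 := by
      intro t ht
      have h' := h1 t
      simp only [if_neg ht] at h'
      exact h'
    have hrel : IsRelPrime F₁ F₂ := by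
      intro d hd1 hd2
      have hdh : ∀ t : Fin 3, d.IsWeightedHomogeneous (triWeight t) 0 := by
        intro t
        by_cases hti : t = i
        · subst hti
          obtain ⟨r, hr⟩ := hd2
          have hh := h2i; rw [hr] at hh
          have hn := hF₂0; rw [hr] at hn
          exact aux_homog_of_dvd hh (left_ne_zero_of_mul hn) (right_ne_zero_of_mul hn)
        · obtain ⟨r, hr⟩ := hd1
          have hh := h1t t hti; rw [hr] at hh
          have hn := hF₁0; rw [hr] at hn
          exact aux_homog_of_dvd hh (left_ne_zero_of_mul hn) (right_ne_zero_of_mul hn)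
      obtain ⟨c0, rfl⟩ := aux_exists_C hdh
      have hc0 : c0 ≠ 0 := by
        rintro rfl
        rw [map_zero] at hd1
        exact hF₁0 (zero_dvd_iff.mp hd1)
      exact aux_isUnit_C hc0
    rw [RingTheory.Sequence.isRegular_iff]
    constructor
    · refine RingTheory.Sequence.IsWeaklyRegular.cons ?_
        (RingTheory.Sequence.IsWeaklyRegular.cons ?_
          (RingTheory.Sequence.IsWeaklyRegular.nil _ _))
      · intro x y hxy
        exact mul_left_cancel₀ hF₁0 (by simpa [smul_eq_mul] using hxy)
      · intro x y hxy
        obtain ⟨x', rfl⟩ := Submodule.Quotient.mk_surjective _ x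
        obtain ⟨y', rfl⟩ := Submodule.Quotient.mk_surjective _ y
        beta_reduce at hxy
        rw [← Submodule.Quotient.mk_smul, ← Submodule.Quotient.mk_smul,
          Submodule.Quotient.eq] at hxy
        rw [← SetLike.mem_coe, Submodule.coe_pointwise_smul] at hxy
        obtain ⟨s, -, hs⟩ := Set.mem_smul_set.mp hxy
        simp only [smul_eq_mul] at hs
        have hdvd : F₁ ∣ F₂ * (x' - y') := ⟨s, by rw [mul_sub, ← hs]⟩
        obtain ⟨u, hu⟩ := hrel.dvd_of_dvd_mul_left hdvd
        rw [Submodule.Quotient.eq, ← SetLike.mem_coe, Submodule.coe_pointwise_smul]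
        exact Set.mem_smul_set.mpr ⟨u, SetLike.mem_coe.mpr Submodule.mem_top,
          by rw [smul_eq_mul, ← hu]⟩
    · intro htop
      apply hproper
      have hofl : Ideal.ofList [F₁, F₂] = Ideal.span {F₁, F₂} := by
        apply congrArg Ideal.span
        ext r
        simp
      have hle : (Ideal.ofList [F₁, F₂] •
          (⊤ : Submodule (MvPolynomial (Fin 3 × Fin 2) K) (MvPolynomial (Fin 3 × Fin 2) K))) ≤
          (Ideal.span {F₁, F₂} : Ideal (MvPolynomial (Fin 3 × Fin 2) K)) := by
        rw [hofl]
        refine Submodule.smul_le.mpr fun r hr n _ => ?_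
        rw [smul_eq_mul]
        exact Ideal.mul_mem_right _ _ hr
      have h1' : (1 : MvPolynomial (Fin 3 × Fin 2) K) ∈
          (⊤ : Submodule (MvPolynomial (Fin 3 × Fin 2) K) (MvPolynomial (Fin 3 × Fin 2) K)) :=
        Submodule.mem_top
      rw [htop] at h1'
      rw [hspan]
      exact (Ideal.eq_top_iff_one _).mpr (hle h1')
  -- combinatorial helpers
  have hijk_facts : ∀ i : Fin 3, i ≠ (if i = 0 then 1 else 0) ∧ i ≠ (if i = 2 then 1 else 2) ∧
      (if i = 0 then (1 : Fin 3) else 0) ≠ (if i = 2 then 1 else 2) := by decide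
  have hcover : ∀ i t : Fin 3, t = i ∨ t = (if i = 0 then 1 else 0) ∨
      t = (if i = 2 then 1 else 2) := by decide
  have hfin4 : ∀ a b u v : Fin 3, a ≠ b → u ≠ a → u ≠ b → v ≠ a → v ≠ b → u = v := by decide
  -- main case of the converse
  have mainCase : ∀ (G₁ G₂ : MvPolynomial (Fin 3 × Fin 2) K) (e₁ e₂ : Fin 3 → ℕ),
      TriHomogeneous G₁ e₁ → TriHomogeneous G₂ e₂ →
      lineIdeal A B C U₃ U₂ U₁ = Ideal.span {G₁, G₂} →
      (∀ t, e₁ t = 0 ∨ e₂ t = 0) → (∃ t, e₁ t ≠ 0) →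
      (∀ s t, e₁ s ≠ 0 → e₁ t ≠ 0 → s = t) →
      (∃ F₁ F₂ : MvPolynomial (Fin 3 × Fin 2) K, ∃ i j k : Fin 3, ∃ a b c : ℕ,
        i ≠ j ∧ i ≠ k ∧ j ≠ k ∧
        TriHomogeneous F₁ (fun t => if t = i then a else 0) ∧
        TriHomogeneous F₂ (fun t => if t = j then b else if t = k then c else 0) ∧
        lineIdeal A B C U₃ U₂ U₁ = Ideal.span {F₁, F₂} ∧
        RingTheory.Sequence.IsRegular (MvPolynomial (Fin 3 × Fin 2) K) [F₁, F₂]) := by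
    intro G₁ G₂ e₁ e₂ hg1 hg2 hsp hdis hne1 hsing
    obtain ⟨i, hi⟩ := hne1
    set j := (if i = 0 then (1 : Fin 3) else 0) with hj
    set k := (if i = 2 then (1 : Fin 3) else 2) with hk
    have hij : i ≠ j := by rw [hj]; exact (hijk_facts i).1
    have hik : i ≠ k := by rw [hk]; exact (hijk_facts i).2.1
    have hjk : j ≠ k := by rw [hj, hk]; exact (hijk_facts i).2.2
    have hcover' : ∀ t : Fin 3, t = i ∨ t = j ∨ t = k := by
      rw [hj, hk]; exact hcover i
    have hshape1 : TriHomogeneous G₁ (fun t => if t = i then e₁ i else 0) := by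
      intro t
      show G₁.IsWeightedHomogeneous (triWeight t) (if t = i then e₁ i else 0)
      by_cases h : t = i
      · subst h; rw [if_pos rfl]; exact hg1 t
      · rw [if_neg h]
        have h0 : e₁ t = 0 := by
          by_contra h0
          exact h (hsing t i h0 hi)
        have h' := hg1 t; rwa [h0] at h'
    have hshape2 : TriHomogeneous G₂
        (fun t => if t = j then e₂ j else if t = k then e₂ k else 0) := by
      intro t
      show G₂.IsWeightedHomogeneous (triWeight t)
        (if t = j then e₂ j else if t = k then e₂ k else 0)
      rcases hcover' t with h | h | h
      · subst h
        rw [if_neg hij, if_neg hik]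
        have h' := hg2 t
        rwa [(hdis t).resolve_left hi] at h'
      · subst h
        rw [if_pos rfl]
        exact hg2 j
      · subst h
        rw [if_neg hjk.symm, if_pos rfl]
        exact hg2 k
    exact ⟨G₁, G₂, i, j, k, e₁ i, e₂ j, e₂ k, hij, hik, hjk, hshape1, hshape2, hsp,
      part1 G₁ G₂ i j k (e₁ i) (e₂ j) (e₂ k) hij hik hjk hshape1 hshape2 hsp⟩
  refine ⟨part1, ?_⟩
  rintro ⟨F₁, F₂, ⟨d₁, d₂, h1, h2⟩, hspan, -⟩
  have hF₁0 : F₁ ≠ 0 := by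
    rintro rfl
    exact hNP F₂ (hspan.trans Submodule.span_insert_zero)
  have hF₂0 : F₂ ≠ 0 := by
    rintro rfl
    refine hNP F₁ (hspan.trans ?_)
    rw [Set.pair_comm F₁ 0]
    exact Submodule.span_insert_zero
  have hdisj : ∀ t, d₁ t = 0 ∨ d₂ t = 0 := by
    intro t
    by_contra hcon
    push_neg at hcon
    have hzm : z t ∈ Ideal.span {F₁, F₂} := by
      have := hzmem t; rwa [hspan] at this
    exact hzne t (aux_eq_zero_of_mem_span (h1 t) (h2 t) hcon.1 hcon.2 (hzhom t) hzm)
  have hsupp : ∀ (G : MvPolynomial (Fin 3 × Fin 2) K) (e : Fin 3 → ℕ),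
      TriHomogeneous G e → G ≠ 0 → G ∈ Ideal.span {F₁, F₂} → ∃ t, e t ≠ 0 := by
    intro G e hG hG0 hmem
    by_contra hall
    push_neg at hall
    have hh : ∀ t : Fin 3, G.IsWeightedHomogeneous (triWeight t) 0 := by
      intro t
      have h' := hG t
      rwa [hall t] at h'
    obtain ⟨c, rfl⟩ := aux_exists_C hh
    have hcne : c ≠ 0 := fun h => hG0 (by rw [h, map_zero])
    have : Ideal.span {F₁, F₂} = ⊤ :=
      Ideal.eq_top_of_isUnit_mem _ hmem (aux_isUnit_C hcne)
    exact hproper (hspan.trans this)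
  obtain ⟨t₁, ht₁⟩ := hsupp F₁ d₁ h1 hF₁0 (Ideal.subset_span (Set.mem_insert _ _))
  obtain ⟨t₂, ht₂⟩ := hsupp F₂ d₂ h2 hF₂0 (Ideal.subset_span (Set.mem_insert_of_mem _ rfl))
  by_cases hsing : ∀ s t, d₁ s ≠ 0 → d₁ t ≠ 0 → s = t
  · exact mainCase F₁ F₂ d₁ d₂ h1 h2 hspan hdisj ⟨t₁, ht₁⟩ hsing
  · push_neg at hsing
    obtain ⟨s, t, hs, ht, hst⟩ := hsing
    refine mainCase F₂ F₁ d₂ d₁ h2 h1 (hspan.trans Ideal.span_pair_comm)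
      (fun u => (hdisj u).symm) ⟨t₂, ht₂⟩ ?_
    intro u v hu hv
    have hus : u ≠ s := fun h => hs (h ▸ ((hdisj u).resolve_right hu))
    have hut : u ≠ t := fun h => ht (h ▸ ((hdisj u).resolve_right hu))
    have hvs : v ≠ s := fun h => hs (h ▸ ((hdisj v).resolve_right hv))
    have hvt : v ≠ t := fun h => ht (h ▸ ((hdisj v).resolve_right hv))
    exact hfin4 s t u v hst hus hut hvs hvt

end
end

section
/- In the monomial setting: the ideal J = (∏_{j∈[b]} b_j, ∏_{i∈[a]} a_i ∏_{k∈[c]} c_k) in K[a₁,…,a_a, b₁,…,b_b, c₁,…,c_c] is a complete intersection and equals ⋂_{i∈[a], j∈[b]} (a_i, b_j) ∩ ⋂_{j∈[b], k∈[c]} (b_j, c_k). -/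
open MvPolynomial

section Aux

variable {σ K ι : Type*}

lemma aux_prod_X [CommSemiring K] [Fintype ι] (v : ι → σ) :
    (∏ i, (X (v i) : MvPolynomial σ K)) =
      monomial (∑ i, Finsupp.single (v i) 1) 1 := by
  classical
  induction (Finset.univ : Finset ι) using Finset.cons_induction with
  | empty => simp
  | cons i s hi ih =>
      rw [Finset.prod_cons, Finset.sum_cons, ih]
      show monomial (Finsupp.single (v i) 1) (1 : K) * _ = _
      rw [monomial_mul, one_mul]

lemma aux_sum_single_le [Fintype ι] {v : ι → σ} (hv : Function.Injective v)
    (m : σ →₀ ℕ) :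
    (∑ i, Finsupp.single (v i) 1) ≤ m ↔ ∀ i, 1 ≤ m (v i) := by
  classical
  constructor
  · intro h i
    refine le_trans ?_ (h (v i))
    rw [Finsupp.finset_sum_apply]
    have : (Finsupp.single (v i) 1 : σ →₀ ℕ) (v i) = 1 := by simp
    calc (1 : ℕ) = (Finsupp.single (v i) 1 : σ →₀ ℕ) (v i) := this.symm
      _ ≤ _ := Finset.single_le_sum (f := fun i' => (Finsupp.single (v i') 1 : σ →₀ ℕ) (v i))
          (fun _ _ => Nat.zero_le _) (Finset.mem_univ i)
  · intro h x
    rw [Finsupp.finset_sum_apply]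
    by_cases hx : ∃ i, v i = x
    · obtain ⟨i, rfl⟩ := hx
      have : ∀ i' : ι, (Finsupp.single (v i') 1 : σ →₀ ℕ) (v i)
          = if i' = i then 1 else 0 := by
        intro i'; simp [Finsupp.single_apply, hv.eq_iff]
      rw [Finset.sum_congr rfl fun i' _ => this i', Finset.sum_ite_eq' Finset.univ i fun _ => 1]
      simpa using h i
    · push_neg at hx
      have : ∀ i' : ι, (Finsupp.single (v i') 1 : σ →₀ ℕ) x = 0 := by
        intro i'; simp [Finsupp.single_apply, hx i']
      simp [this]

lemma aux_sum_single_apply_eq_zero [Fintype ι] {v : ι → σ} {x : σ}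
    (hx : ∀ i, v i ≠ x) :
    (∑ i, Finsupp.single (v i) 1 : σ →₀ ℕ) x = 0 := by
  classical
  rw [Finsupp.finset_sum_apply]
  refine Finset.sum_eq_zero fun i _ => ?_
  simp [Finsupp.single_apply, hx i]

lemma mem_span_pair_monomial [CommSemiring K] (s t : σ →₀ ℕ) (f : MvPolynomial σ K) :
    f ∈ Ideal.span {monomial s 1, monomial t 1} ↔
      ∀ m ∈ f.support, s ≤ m ∨ t ≤ m := by
  have himg : ({monomial s 1, monomial t 1} : Set (MvPolynomial σ K)) =
      (fun u => monomial u (1 : K)) '' {s, t} := by rw [Set.image_pair]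
  rw [himg, mem_ideal_span_monomial_image]
  simp only [Set.mem_insert_iff, Set.mem_singleton_iff, exists_eq_or_imp, exists_eq_left]

end Aux

/-- monomial setting: in `K[a₁,…,a_a, b₁,…,b_b, c₁,…,c_c]`, the ideal
`J = (∏_j b_j, ∏_i a_i ∏_k c_k)` is a complete intersection (its two generators form a
regular sequence) and equals `⋂_{i,j} (a_i, b_j) ∩ ⋂_{j,k} (b_j, c_k)`. -/
theorem monomial_complete_intersection_of_lines (K : Type*) [Field K] (a b c : ℕ)
    (ha : 0 < a) (hb : 0 < b) (hc : 0 < c) :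
    RingTheory.Sequence.IsRegular (MvPolynomial (Fin a ⊕ Fin b ⊕ Fin c) K)
      [(∏ j : Fin b, X (Sum.inr (Sum.inl j)) : MvPolynomial (Fin a ⊕ Fin b ⊕ Fin c) K),
        (∏ i : Fin a, X (Sum.inl i)) * ∏ k : Fin c, X (Sum.inr (Sum.inr k))] ∧
    Ideal.span
        {(∏ j : Fin b, X (Sum.inr (Sum.inl j)) : MvPolynomial (Fin a ⊕ Fin b ⊕ Fin c) K),
          (∏ i : Fin a, X (Sum.inl i)) * ∏ k : Fin c, X (Sum.inr (Sum.inr k))} =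
      (⨅ (i : Fin a) (j : Fin b),
          Ideal.span {(X (Sum.inl i) : MvPolynomial (Fin a ⊕ Fin b ⊕ Fin c) K),
            X (Sum.inr (Sum.inl j))}) ⊓
        (⨅ (j : Fin b) (k : Fin c),
          Ideal.span {(X (Sum.inr (Sum.inl j)) : MvPolynomial (Fin a ⊕ Fin b ⊕ Fin c) K),
            X (Sum.inr (Sum.inr k))}) := by
  classical
  open Pointwise in
  set σ := Fin a ⊕ Fin b ⊕ Fin c
  set R := MvPolynomial σ K
  -- variable maps
  set vB : Fin b → σ := fun j => Sum.inr (Sum.inl j) with hvB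
  set vAC : Fin a ⊕ Fin c → σ :=
    Sum.elim Sum.inl (fun k => Sum.inr (Sum.inr k)) with hvAC
  have hvBinj : Function.Injective vB := fun x y h =>
    Sum.inl_injective (Sum.inr_injective h)
  have hvACinj : Function.Injective vAC := by
    have hmap : vAC = Sum.map id Sum.inr := by funext x; cases x <;> rfl
    rw [hmap]
    exact Function.injective_id.sumMap Sum.inr_injective
  -- exponents
  set dB : σ →₀ ℕ := ∑ j, Finsupp.single (vB j) 1 with hdB
  set dAC : σ →₀ ℕ := ∑ x, Finsupp.single (vAC x) 1 with hdAC
  -- generators as monomials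
  have hB : (∏ j : Fin b, X (Sum.inr (Sum.inl j)) : R) = monomial dB 1 :=
    aux_prod_X vB
  have hAC : ((∏ i : Fin a, X (Sum.inl i)) * ∏ k : Fin c, X (Sum.inr (Sum.inr k)) : R)
      = monomial dAC 1 := by
    rw [← aux_prod_X (K := K) vAC, Fintype.prod_sum_type]
    rfl
  -- X as monomial
  have hX : ∀ v : σ, (X v : R) = monomial (Finsupp.single v 1) 1 := fun v => rfl
  -- membership criteria
  have hmemJ : ∀ f : R, f ∈ Ideal.span
      {(∏ j : Fin b, X (Sum.inr (Sum.inl j)) : R),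
        (∏ i : Fin a, X (Sum.inl i)) * ∏ k : Fin c, X (Sum.inr (Sum.inr k))} ↔
      ∀ m ∈ f.support, dB ≤ m ∨ dAC ≤ m := by
    intro f; rw [hB, hAC]; exact mem_span_pair_monomial _ _ f
  have hmemP : ∀ (u v : σ) (f : R), f ∈ Ideal.span {(X u : R), X v} ↔
      ∀ m ∈ f.support, 1 ≤ m u ∨ 1 ≤ m v := by
    intro u v f
    rw [hX u, hX v, mem_span_pair_monomial]
    simp only [Finsupp.single_le_iff]
  -- disjointness of variable sets
  have hdACB : ∀ j : Fin b, dAC (vB j) = 0 := by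
    intro j
    refine aux_sum_single_apply_eq_zero fun x => ?_
    rcases x with i | k
    · exact Sum.inl_ne_inr
    · exact fun hcon => Sum.inr_ne_inl (Sum.inr_injective hcon)
  constructor
  · -- regular sequence
    have hmem1 : ∀ (s : σ →₀ ℕ) (f : R), f ∈ Ideal.span {monomial s 1} ↔
        ∀ m ∈ f.support, s ≤ m := by
      intro s f
      have h1 : ({monomial s 1} : Set R) = (fun u => monomial u (1 : K)) '' {s} := by
        simp
      rw [h1, mem_ideal_span_monomial_image]
      simp
    have hB0 : (monomial dB 1 : R) ≠ 0 := by simp [monomial_eq_zero]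
    have hBreg : IsSMulRegular R (monomial dB (1 : K)) := by
      intro x y h
      simp only [smul_eq_mul] at h
      exact mul_left_cancel₀ hB0 h
    have hsmul : ∀ r : R, (r • (⊤ : Submodule R R)) = Ideal.span {r} := by
      intro r
      rw [← Submodule.ideal_span_singleton_smul, Ideal.smul_eq_mul, Ideal.mul_top]
    have hACreg : IsSMulRegular
        (QuotSMulTop (monomial dB (1 : K) : R) R) (monomial dAC (1 : K)) := by
      rw [isSMulRegular_quotient_iff_mem_of_smul_mem]
      intro x hx
      rw [hsmul, hmem1] at hx ⊢
      intro m hm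
      have hmem : dAC + m ∈ (monomial dAC (1 : K) • x).support := by
        rw [mem_support_iff, smul_eq_mul, coeff_monomial_mul, one_mul]
        exact mem_support_iff.mp hm
      have h2 := hx _ hmem
      rw [Finsupp.le_iff] at h2 ⊢
      intro s hs
      have hs' : dB s ≠ 0 := Finsupp.mem_support_iff.mp hs
      obtain ⟨j, rfl⟩ : ∃ j, vB j = s := by
        by_contra hcon
        push_neg at hcon
        exact hs' (aux_sum_single_apply_eq_zero (v := vB) hcon)
      have h3 := h2 _ hs
      rw [Finsupp.add_apply, hdACB j] at h3
      omega
    rw [hB, hAC, RingTheory.Sequence.isRegular_iff]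
    constructor
    · exact RingTheory.Sequence.IsWeaklyRegular.cons hBreg
        (RingTheory.Sequence.IsWeaklyRegular.cons hACreg
          (RingTheory.Sequence.IsWeaklyRegular.nil _ _))
    · have hofList : Ideal.ofList [(monomial dB (1 : K) : R), monomial dAC 1] •
          (⊤ : Submodule R R) = Ideal.span {(monomial dB (1 : K) : R), monomial dAC 1} := by
        rw [Ideal.ofList_cons, Ideal.ofList_singleton, ← Ideal.span_union,
          Set.singleton_union, Ideal.smul_eq_mul, Ideal.mul_top]
      rw [hofList]
      intro heq
      have h1mem : (1 : R) ∈ Ideal.span {(monomial dB (1 : K) : R), monomial dAC 1} := by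
        rw [← heq]; trivial
      rw [mem_span_pair_monomial] at h1mem
      have h0 : (0 : σ →₀ ℕ) ∈ (1 : R).support := by
        rw [mem_support_iff]
        simp
      rcases h1mem 0 h0 with h' | h'
      · rw [aux_sum_single_le hvBinj] at h'
        simpa using h' ⟨0, hb⟩
      · rw [aux_sum_single_le hvACinj] at h'
        simpa using h' (Sum.inl ⟨0, ha⟩)
  · -- ideal equality
    ext f
    rw [hmemJ f, Submodule.mem_inf]
    simp only [Ideal.mem_iInf, hmemP]
    constructor
    · intro h
      refine ⟨fun i j m hm => ?_, fun j k m hm => ?_⟩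
      · rcases h m hm with h' | h'
        · exact Or.inr ((aux_sum_single_le hvBinj m).mp h' j)
        · exact Or.inl ((aux_sum_single_le hvACinj m).mp h' (Sum.inl i))
      · rcases h m hm with h' | h'
        · exact Or.inl ((aux_sum_single_le hvBinj m).mp h' j)
        · exact Or.inr ((aux_sum_single_le hvACinj m).mp h' (Sum.inr k))
    · rintro ⟨h1, h2⟩ m hm
      by_cases hBm : dB ≤ m
      · exact Or.inl hBm
      · right
        rw [aux_sum_single_le hvBinj, not_forall] at hBm
        obtain ⟨j0, hj0⟩ := hBm
        rw [aux_sum_single_le hvACinj]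
        rintro (i | k)
        · rcases h1 i j0 m hm with h' | h'
          · exact h'
          · exact absurd h' hj0
        · rcases h2 j0 k m hm with h' | h'
          · exact absurd h' hj0
          · exact h'
end
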